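/- arXiv:2108.00140 — 5 statements merged into one kernel-verified Lean document; each statement's English description precedes it below -/
import Mathlib

section
/- Suppose the class 𝓛 of a complete duality pair (L,A) is closed under kernels of epimorphisms. Then the class of Gorenstein (L,A)-projective modules equals the intersection of the class of Ding projective modules with the class of modules X satisfying Extⁱ_R(X, L) = 0 for all L ∈ 𝓛 and all i ≥ 1. -/
open CategoryTheory CategoryTheory.Limits DirectSum

namespace DualityPaper

variable {R : Type} [Ring R]

/-- The right `R`-module structure on the group of additive maps out of a left `R`-module,
given by `(f • r) m = f (r • m)`. -/
instance charModuleRight (M A : Type) [AddCommGroup M] [AddCommGroup A] [Module R M] :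
    Module Rᵐᵒᵖ (M →+ A) where
  smul r f := f.comp (DistribMulAction.toAddMonoidHom M r.unop)
  one_smul f := AddMonoidHom.ext fun m => by
    show f ((1 : Rᵐᵒᵖ).unop • m) = f m
    simp
  mul_smul r s f := AddMonoidHom.ext fun m => by
    show f ((r * s).unop • m) = f (s.unop • r.unop • m)
    rw [MulOpposite.unop_mul, mul_smul]
  smul_zero r := rfl
  smul_add r f g := rfl
  add_smul r s f := AddMonoidHom.ext fun m => by
    show f ((r + s).unop • m) = f (r.unop • m) + f (s.unop • m)
    rw [MulOpposite.unop_add, add_smul, map_add]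
  zero_smul f := AddMonoidHom.ext fun m => by
    show f ((0 : Rᵐᵒᵖ).unop • m) = 0
    simp

/-- The left `R`-module structure on the group of additive maps out of a right `R`-module. -/
instance charModuleLeft (N A : Type) [AddCommGroup N] [AddCommGroup A] [Module Rᵐᵒᵖ N] :
    Module R (N →+ A) where
  smul r f := f.comp (DistribMulAction.toAddMonoidHom N (MulOpposite.op r))
  one_smul f := AddMonoidHom.ext fun m => by
    show f ((MulOpposite.op (1 : R)) • m) = f m
    simp
  mul_smul r s f := AddMonoidHom.ext fun m => by
    show f (MulOpposite.op (r * s) • m) = f (MulOpposite.op s • MulOpposite.op r • m)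
    rw [MulOpposite.op_mul, mul_smul]
  smul_zero r := rfl
  smul_add r f g := rfl
  add_smul r s f := AddMonoidHom.ext fun m => by
    show f (MulOpposite.op (r + s) • m) = f (MulOpposite.op r • m) + f (MulOpposite.op s • m)
    rw [MulOpposite.op_add, add_smul, map_add]
  zero_smul f := AddMonoidHom.ext fun m => by
    show f (MulOpposite.op (0 : R) • m) = 0
    simp

/-- The character module `M⁺ = Hom_ℤ(M, ℚ/ℤ)` of a left module, as a right module. -/
def charL (M : ModuleCat.{0} R) : ModuleCat.{0} Rᵐᵒᵖ :=
  ModuleCat.of Rᵐᵒᵖ (M →+ AddCircle (1 : ℚ))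

/-- The character module `N⁺ = Hom_ℤ(N, ℚ/ℤ)` of a right module, as a left module. -/
def charR (N : ModuleCat.{0} Rᵐᵒᵖ) : ModuleCat.{0} R :=
  ModuleCat.of R (N →+ AddCircle (1 : ℚ))

/-- A left module over a (possibly noncommutative) ring is flat iff its character module is an
injective right module (Lambek); we take this as the definition of flatness. -/
def IsFlatMod (M : ModuleCat.{0} R) : Prop := CategoryTheory.Injective (charL M)

/-- `f`, `g` form a short exact sequence `0 → A → B → C → 0`. -/
def SES {A B C : ModuleCat.{0} R} (f : A ⟶ B) (g : B ⟶ C) : Prop :=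
  ∃ w : f ≫ g = 0, (ShortComplex.mk f g w).ShortExact

/-- Vanishing of `Ext^n_R(M, N)`. -/
def ExtVanish (n : ℕ) (M N : ModuleCat.{0} R) : Prop :=
  Subsingleton (((_root_.Ext ℤ (ModuleCat.{0} R) n).obj (Opposite.op M)).obj N)

/-- A complete duality pair `(𝓛, 𝓐)` over `R`. -/
structure CompleteDualityPair (𝓛 : Set (ModuleCat.{0} R)) (𝓐 : Set (ModuleCat.{0} Rᵐᵒᵖ)) :
    Prop where
  isoClosed_L : ∀ {M N : ModuleCat.{0} R}, (M ≅ N) → M ∈ 𝓛 → N ∈ 𝓛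
  isoClosed_A : ∀ {M N : ModuleCat.{0} Rᵐᵒᵖ}, (M ≅ N) → M ∈ 𝓐 → N ∈ 𝓐
  char_mem_iff : ∀ M : ModuleCat.{0} R, M ∈ 𝓛 ↔ charL M ∈ 𝓐
  char_mem_iff' : ∀ N : ModuleCat.{0} Rᵐᵒᵖ, N ∈ 𝓐 ↔ charR N ∈ 𝓛
  summands_A : ∀ A ∈ 𝓐, ∀ (B : ModuleCat.{0} Rᵐᵒᵖ) (i : B ⟶ A) (p : A ⟶ B),
    i ≫ p = 𝟙 B → B ∈ 𝓐
  sums_A : ∀ A B : ModuleCat.{0} Rᵐᵒᵖ, A ∈ 𝓐 → B ∈ 𝓐 → ModuleCat.of Rᵐᵒᵖ (A × B) ∈ 𝓐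
  summands_L : ∀ L ∈ 𝓛, ∀ (K : ModuleCat.{0} R) (i : K ⟶ L) (p : L ⟶ K),
    i ≫ p = 𝟙 K → K ∈ 𝓛
  sums_L : ∀ L K : ModuleCat.{0} R, L ∈ 𝓛 → K ∈ 𝓛 → ModuleCat.of R (L × K) ∈ 𝓛
  self_mem : ModuleCat.of R R ∈ 𝓛
  coprod_L : ∀ (ι : Type) (f : ι → ModuleCat.{0} R), (∀ i, f i ∈ 𝓛) →
    ModuleCat.of R (⨁ i, f i) ∈ 𝓛
  ext_L : ∀ {A B C : ModuleCat.{0} R} (f : A ⟶ B) (g : B ⟶ C),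
    SES f g → A ∈ 𝓛 → C ∈ 𝓛 → B ∈ 𝓛

/-- A doubly infinite exact sequence of projectives which stays exact after applying
`Hom_R(-, T)` for every `T` in the class `𝓣`. -/
structure IsTotallyAcyclicWrt (𝓣 : Set (ModuleCat.{0} R))
    (C : ChainComplex (ModuleCat.{0} R) ℤ) : Prop where
  projective : ∀ n, Projective (C.X n)
  exact : ∀ n, (C.sc n).Exact
  homExact : ∀ T ∈ 𝓣, ∀ (n : ℤ) (g : C.X n ⟶ T), C.d (n + 1) n ≫ g = 0 →
    ∃ h : C.X (n - 1) ⟶ T, C.d n (n - 1) ≫ h = g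

/-- `M` is Gorenstein projective relative to the class `𝓣`:  it is a kernel in a
`Hom_R(-, 𝓣)`-exact exact sequence of projective modules. -/
def IsGProj (𝓣 : Set (ModuleCat.{0} R)) (M : ModuleCat.{0} R) : Prop :=
  ∃ C : ChainComplex (ModuleCat.{0} R) ℤ, IsTotallyAcyclicWrt 𝓣 C ∧
    ∃ n : ℤ, Nonempty (M ≅ kernel (C.d n (n - 1)))

/-- `M` is strongly Gorenstein `(𝓛,𝓐)`-projective. -/
def IsSGProj (𝓣 : Set (ModuleCat.{0} R)) (M : ModuleCat.{0} R) : Prop :=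
  ∃ (P : ModuleCat.{0} R) (f : P ⟶ P), Projective P ∧
    (∃ w : f ≫ f = 0, (ShortComplex.mk f f w).Exact) ∧
    (∀ T ∈ 𝓣, ∀ g : P ⟶ T, f ≫ g = 0 → ∃ h : P ⟶ T, f ≫ h = g) ∧
    Nonempty (M ≅ kernel f)

/-- Resolution dimension of `M` with respect to a class `𝓒` is at most `n`. -/
def ResDimLE (𝓒 : Set (ModuleCat.{0} R)) : ℕ → ModuleCat.{0} R → Prop
  | 0, M => M ∈ 𝓒
  | n + 1, M => ∃ (K C : ModuleCat.{0} R) (f : K ⟶ C) (g : C ⟶ M),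
      C ∈ 𝓒 ∧ SES f g ∧ ResDimLE 𝓒 n K

/-- `K` is an `n`-th kernel of an exact sequence `0 → K → C_{n-1} → ⋯ → C₀ → M → 0`
with all `Cᵢ` in `𝓒`. -/
def IsNthSyzygy (𝓒 : Set (ModuleCat.{0} R)) : ℕ → ModuleCat.{0} R → ModuleCat.{0} R → Prop
  | 0, M, K => Nonempty (K ≅ M)
  | n + 1, M, K => ∃ (S C : ModuleCat.{0} R) (f : S ⟶ C) (g : C ⟶ M),
      C ∈ 𝓒 ∧ SES f g ∧ IsNthSyzygy 𝓒 n S K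

/-- A left Frobenius pair `(𝓧, ω)`. -/
structure LeftFrobeniusPair (𝓧 ω : Set (ModuleCat.{0} R)) : Prop where
  summands_X : ∀ X ∈ 𝓧, ∀ (Y : ModuleCat.{0} R) (i : Y ⟶ X) (p : X ⟶ Y),
    i ≫ p = 𝟙 Y → Y ∈ 𝓧
  extensions_X : ∀ {A B C : ModuleCat.{0} R} (f : A ⟶ B) (g : B ⟶ C),
    SES f g → A ∈ 𝓧 → C ∈ 𝓧 → B ∈ 𝓧
  kerEpi_X : ∀ {A B C : ModuleCat.{0} R} (f : A ⟶ B) (g : B ⟶ C),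
    SES f g → B ∈ 𝓧 → C ∈ 𝓧 → A ∈ 𝓧
  subset : ω ⊆ 𝓧
  inj : ∀ X ∈ 𝓧, ∀ W ∈ ω, ∀ i : ℕ, 1 ≤ i → ExtVanish i X W
  cogen : ∀ X ∈ 𝓧, ∃ (W X' : ModuleCat.{0} R) (f : X ⟶ W) (g : W ⟶ X'),
    W ∈ ω ∧ X' ∈ 𝓧 ∧ SES f g
  summands_ω : ∀ W ∈ ω, ∀ (V : ModuleCat.{0} R) (i : V ⟶ W) (p : W ⟶ V),
    i ≫ p = 𝟙 V → V ∈ ω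


open MulOpposite in
theorem isFlatMod_free (ι : Type) : IsFlatMod (R := R) (ModuleCat.of R (ι →₀ R)) := by
  constructor
  intro X Y g f hf
  have hfinj : Function.Injective f := (ModuleCat.mono_iff_injective f).mp hf
  let ev : ↑(charL (R := R) (ModuleCat.of R (ι →₀ R))) → ((ι →₀ R) →+ AddCircle (1:ℚ)) := id
  have hsurj : ∀ j : ι, ∃ c : (↥Y →+ AddCircle (1:ℚ)),
      ∀ x : ↥X, c (f x) = ev (g x) (Finsupp.single j (1:R)) := by
    intro j
    obtain ⟨c, hc⟩ := CharacterModule.dual_surjective_of_injective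
      (R := ℤ) (f.hom.toAddMonoidHom.toIntLinearMap) hfinj
      (AddMonoidHom.mk' (fun x => ev (g x) (Finsupp.single j (1:R))) (by
        intro a b
        have : g (a + b) = g a + g b := map_add g.hom a b
        show ev (g (a+b)) _ = ev (g a) _ + ev (g b) _
        rw [this]
        rfl))
    exact ⟨c, fun x => congrArg (fun (t : CharacterModule ↥X) => t x) hc⟩
  choose c hc using hsurj
  let tmap : ↥Y → ((ι →₀ R) →+ AddCircle (1:ℚ)) := fun y =>
    Finsupp.liftAddHom (fun j => (c j).comp
      (AddMonoidHom.mk' (fun r => (op r : Rᵐᵒᵖ) • y)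
        (fun a b => by
          show (op (a+b) : Rᵐᵒᵖ) • y = (op a : Rᵐᵒᵖ) • y + (op b : Rᵐᵒᵖ) • y
          rw [MulOpposite.op_add, add_smul])))
  have tmap_single : ∀ (y : ↥Y) (j : ι) (r : R),
      tmap y (Finsupp.single j r) = c j ((op r : Rᵐᵒᵖ) • y) := by
    intro y j r
    simp [tmap, Finsupp.liftAddHom_apply_single]
  let lmap : ↥Y →ₗ[Rᵐᵒᵖ] ((ι →₀ R) →+ AddCircle (1:ℚ)) :=
    { toFun := tmap
      map_add' := by
        intro y y'
        refine Finsupp.addHom_ext (fun j r => ?_)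
        rw [AddMonoidHom.add_apply, tmap_single, tmap_single, tmap_single, smul_add, map_add]
      map_smul' := by
        intro s y
        refine Finsupp.addHom_ext (fun j r => ?_)
        show tmap (s • y) (Finsupp.single j r) = (s • tmap y) (Finsupp.single j r)
        rw [tmap_single]
        show _ = tmap y (s.unop • Finsupp.single j r)
        rw [Finsupp.smul_single, tmap_single, smul_eq_mul, ← mul_smul, MulOpposite.op_mul,
          op_unop]
      }
  refine ⟨ModuleCat.ofHom lmap, ?_⟩
  apply ModuleCat.hom_ext
  apply LinearMap.ext
  intro x
  refine Finsupp.addHom_ext (fun j r => ?_)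
  show tmap (f x) (Finsupp.single j r) = ev (g x) (Finsupp.single j r)
  have : (op r : Rᵐᵒᵖ) • (f x) = f ((op r : Rᵐᵒᵖ) • x) := (map_smul f.hom _ _).symm
  rw [tmap_single, this, hc]
  have : g ((op r : Rᵐᵒᵖ) • x) = (op r : Rᵐᵒᵖ) • (g x) := map_smul g.hom _ _
  rw [this]
  show ev (g x) ((op r : Rᵐᵒᵖ).unop • Finsupp.single j (1:R)) = _
  rw [unop_op, Finsupp.smul_single, smul_eq_mul, mul_one]


theorem free_mem_L {𝓛 : Set (ModuleCat.{0} R)} {𝓐 : Set (ModuleCat.{0} Rᵐᵒᵖ)}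
    (hdp : CompleteDualityPair 𝓛 𝓐) (ι : Type) :
    ModuleCat.of R (ι →₀ R) ∈ 𝓛 := by
  classical
  have h := hdp.coprod_L ι (fun _ => ModuleCat.of R R) (fun _ => hdp.self_mem)
  exact hdp.isoClosed_L ((finsuppLEquivDirectSum R R ι).symm.toModuleIso) h

theorem flat_mem_L {𝓛 : Set (ModuleCat.{0} R)} {𝓐 : Set (ModuleCat.{0} Rᵐᵒᵖ)}
    (hdp : CompleteDualityPair 𝓛 𝓐) (F : ModuleCat.{0} R)
    (hF : IsFlatMod F) : F ∈ 𝓛 := by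
  have hfree := free_mem_L hdp (↥F)
  let FF := ModuleCat.of R (↥F →₀ R)
  let p : FF ⟶ F := ModuleCat.ofHom (Finsupp.linearCombination R id)
  have hpsurj : Function.Surjective p := Finsupp.linearCombination_id_surjective R ↥F
  let evF : ↑(charL F) → (↥F →+ AddCircle (1:ℚ)) := id
  let cp : charL F ⟶ charL FF := ModuleCat.ofHom (
    { toFun := fun φ => ((φ : ↥F →+ AddCircle (1:ℚ)).comp p.hom.toAddMonoidHom :
        ↥FF →+ AddCircle (1:ℚ))
      map_add' := fun φ ψ => rfl
      map_smul' := fun s φ => by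
        refine AddMonoidHom.ext (fun m => ?_)
        show evF φ (s.unop • p m) = evF φ (p (s.unop • m))
        exact congrArg (evF φ) (map_smul p.hom _ _).symm } : ↑(charL F) →ₗ[Rᵐᵒᵖ] ↑(charL FF))
  haveI : Mono cp := (ModuleCat.mono_iff_injective _).mpr (by
    intro φ ψ h
    refine AddMonoidHom.ext (fun m => ?_)
    obtain ⟨x, rfl⟩ := hpsurj m
    exact congrArg (fun (t : ↥FF →+ AddCircle (1:ℚ)) => t x) h)
  haveI : CategoryTheory.Injective (charL F) := hF
  have hA : charL FF ∈ 𝓐 := (hdp.char_mem_iff _).mp hfree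
  exact (hdp.char_mem_iff F).mpr (hdp.summands_A _ hA (charL F) cp
    (CategoryTheory.Injective.factorThru (𝟙 _) cp)
    (CategoryTheory.Injective.comp_factorThru _ _))

/-- homExact-type lifting condition at index `m`. -/
def Lifts (C : ChainComplex (ModuleCat.{0} R) ℤ) (L : ModuleCat.{0} R) (m : ℤ) : Prop :=
  ∀ g : C.X m ⟶ L, C.d (m+1) m ≫ g = 0 → ∃ h : C.X (m-1) ⟶ L, C.d m (m-1) ≫ h = g

variable {C : ChainComplex (ModuleCat.{0} R) ℤ} {n0 : ℤ}

theorem conc_exact (C : ChainComplex (ModuleCat.{0} R) ℤ)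
    (hE : ∀ n, (C.sc n).Exact) {j k l : ℤ} (hk : k = j+1) (hl : l = j-1) :
    ∀ x : C.X j, C.d j l x = 0 → ∃ y : C.X k, C.d k j y = x := by
  subst hk; subst hl
  have h := (HomologicalComplex.exactAt_iff' C (j+1) j (j-1) (by simp) (by simp)).1 (hE j)
  exact (ShortComplex.moduleCat_exact_iff _).1 h

/-- index embedding -/
def eIdx (n0 : ℤ) (i : ℕ) : ℤ := n0 + 1 + i

theorem eIdx_succ (n0 : ℤ) (i : ℕ) : eIdx n0 (i+1) = eIdx n0 i + 1 := by
  simp only [eIdx]; push_cast; ring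

/-- the truncated complex as an ℕ-indexed chain complex -/
noncomputable def resCplx (C : ChainComplex (ModuleCat.{0} R) ℤ) (n0 : ℤ) : ChainComplex (ModuleCat.{0} R) ℕ :=
  ChainComplex.of (fun i => C.X (eIdx n0 i)) (fun i => C.d (eIdx n0 (i+1)) (eIdx n0 i))
    (fun i => C.d_comp_d _ _ _)

theorem resCplx_d (C : ChainComplex (ModuleCat.{0} R) ℤ) (n0 : ℤ) (i : ℕ) :
    (resCplx C n0).d (i+1) i = C.d (eIdx n0 (i+1)) (eIdx n0 i) :=
  ChainComplex.of_d (fun i => C.X (eIdx n0 i)) (fun i => C.d (eIdx n0 (i+1)) (eIdx n0 i)) i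

/-- the augmentation -/
noncomputable def resAug (C : ChainComplex (ModuleCat.{0} R) ℤ) (n0 : ℤ) : (resCplx C n0).X 0 ⟶ kernel (C.d n0 (n0-1)) :=
  kernel.lift (C.d n0 (n0-1)) (C.d (eIdx n0 0) n0) (C.d_comp_d _ _ _)

theorem resAug_surj (C : ChainComplex (ModuleCat.{0} R) ℤ)
    (hE : ∀ n, (C.sc n).Exact) (n0 : ℤ) : Function.Surjective (resAug C n0) := by
  intro z
  have hz : C.d n0 (n0-1) (kernel.ι (C.d n0 (n0-1)) z) = 0 := by
    have := kernel.condition (C.d n0 (n0-1))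
    exact congrArg (fun (t : kernel (C.d n0 (n0-1)) ⟶ C.X (n0-1)) => t z) this
  obtain ⟨y, hy⟩ := conc_exact C hE (j := n0) (k := eIdx n0 0) (l := n0 - 1)
    (by simp [eIdx]) rfl _ hz
  refine ⟨y, ?_⟩
  apply (ModuleCat.mono_iff_injective (kernel.ι (C.d n0 (n0-1)))).1 inferInstance
  rw [← hy]
  exact congrArg (fun (t : (resCplx C n0).X 0 ⟶ C.X n0) => t y)
    (kernel.lift_ι (C.d n0 (n0-1)) (C.d (eIdx n0 0) n0) (C.d_comp_d _ _ _))

theorem resCplx_exact_succ (C : ChainComplex (ModuleCat.{0} R) ℤ)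
    (hE : ∀ n, (C.sc n).Exact) (n0 : ℤ) (n : ℕ) : (resCplx C n0).ExactAt (n+1) := by
  rw [HomologicalComplex.exactAt_iff' _ (n+1+1) (n+1) n (by simp) (by simp)]
  rw [ShortComplex.moduleCat_exact_iff]
  intro x hx
  have hx' : C.d (eIdx n0 (n+1)) (eIdx n0 (n+1) - 1) x = 0 := by
    have h1 : eIdx n0 (n+1) - 1 = eIdx n0 n := by rw [eIdx_succ]; ring
    rw [h1]
    rw [← resCplx_d C n0 n]
    exact hx
  obtain ⟨y, hy⟩ := conc_exact C hE (j := eIdx n0 (n+1)) (k := eIdx n0 (n+2))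
    (l := eIdx n0 (n+1) - 1) (eIdx_succ n0 (n+1)) rfl x hx'
  have hy' : (resCplx C n0).d (n+1+1) (n+1) y = x := by
    rw [resCplx_d C n0 (n+1)]; exact hy
  exact ⟨y, hy'⟩

noncomputable def resolution (C : ChainComplex (ModuleCat.{0} R) ℤ)
    (hP : ∀ n, Projective (C.X n)) (hE : ∀ n, (C.sc n).Exact) (n0 : ℤ) :
    ProjectiveResolution (kernel (C.d n0 (n0-1))) where
  complex := resCplx C n0
  projective := fun i => hP _
  π := (ChainComplex.toSingle₀Equiv _ _).symm ⟨resAug C n0, by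
    rw [show ((resCplx C n0).d 1 0) = C.d (eIdx n0 1) (eIdx n0 0) from resCplx_d C n0 0]
    rw [← cancel_mono (kernel.ι (C.d n0 (n0-1)))]
    simp only [resAug, Category.assoc, kernel.lift_ι, zero_comp]
    exact (Category.assoc _ _ _).trans ((congrArg (fun t => C.d (eIdx n0 1) (eIdx n0 0) ≫ t) (kernel.lift_ι (C.d n0 (n0-1)) (C.d (eIdx n0 0) n0) (C.d_comp_d _ _ _))).trans (C.d_comp_d _ _ _))⟩
  quasiIso := ⟨fun n => by
    cases n with
    | zero =>
      rw [ChainComplex.quasiIsoAt₀_iff, ShortComplex.quasiIso_iff_of_zeros']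
      · have w0 : C.d (eIdx n0 1) (eIdx n0 0) ≫ resAug C n0 = 0 := by
          rw [← cancel_mono (kernel.ι (C.d n0 (n0-1)))]
          simp only [resAug, Category.assoc, kernel.lift_ι, zero_comp]
          exact (Category.assoc _ _ _).trans ((congrArg (fun t => C.d (eIdx n0 1) (eIdx n0 0) ≫ t) (kernel.lift_ι (C.d n0 (n0-1)) (C.d (eIdx n0 0) n0) (C.d_comp_d _ _ _))).trans (C.d_comp_d _ _ _))
        have hexact : (ShortComplex.mk (C.d (eIdx n0 1) (eIdx n0 0)) (resAug C n0) w0).Exact := by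
          rw [ShortComplex.moduleCat_exact_iff]
          intro x hx
          have hx' : C.d (eIdx n0 0) n0 x = 0 := by
            have h := congrArg (fun (t : (resCplx C n0).X 0 ⟶ C.X n0) => t x)
              (kernel.lift_ι (C.d n0 (n0-1)) (C.d (eIdx n0 0) n0) (C.d_comp_d _ _ _))
            have h2 : kernel.ι (C.d n0 (n0-1)) (resAug C n0 x) = C.d (eIdx n0 0) n0 x := h
            rw [← h2, show resAug C n0 x = 0 from hx]
            exact map_zero _
          obtain ⟨y, hy⟩ := conc_exact C hE (j := eIdx n0 0) (k := eIdx n0 1)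
            (l := n0) (eIdx_succ n0 0) (by simp [eIdx]) x hx'
          exact ⟨y, hy⟩
        have hepi : Epi (ShortComplex.mk (C.d (eIdx n0 1) (eIdx n0 0)) (resAug C n0) w0).g :=
          (ModuleCat.epi_iff_surjective _).2 (resAug_surj C hE n0)
        refine (ShortComplex.exact_and_epi_g_iff_of_iso ?_).2 ⟨hexact, hepi⟩
        exact ShortComplex.isoMk (Iso.refl _) (Iso.refl _) (Iso.refl _)
          (by simp [resCplx_d C n0 0]; exact (Category.id_comp _).trans (Category.comp_id _).symm)
          (by simp [ChainComplex.toSingle₀Equiv_symm_apply_f_zero]; exact (Category.id_comp _).trans (Category.comp_id _).symm)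
      all_goals rfl
    | succ n =>
      rw [quasiIsoAt_iff_exactAt']
      · exact resCplx_exact_succ C hE n0 n
      · apply ChainComplex.exactAt_succ_single_obj⟩

theorem subsingleton_iff_isZero (M : ModuleCat.{0} ℤ) : Subsingleton M ↔ IsZero M := by
  constructor
  · intro h; exact ModuleCat.isZero_of_subsingleton M
  · intro h
    have hz : ∀ a : M, a = 0 := by
      intro a
      have h1 : (𝟙 M : M ⟶ M) = 0 := h.eq_of_src _ _
      calc a = (𝟙 M : M ⟶ M) a := rfl
        _ = (0 : M ⟶ M) a := by rw [h1]
        _ = 0 := rfl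
    exact ⟨fun a b => by rw [hz a, hz b]⟩

theorem lifts_elim (C : ChainComplex (ModuleCat.{0} R) ℤ) (L : ModuleCat.{0} R)
    {m k l : ℤ} (hk : k = m+1) (hl : l = m-1) (H : Lifts C L m) :
    ∀ g : C.X m ⟶ L, C.d k m ≫ g = 0 → ∃ h : C.X l ⟶ L, C.d m l ≫ h = g := by
  subst hk; subst hl; exact H

theorem lifts_intro (C : ChainComplex (ModuleCat.{0} R) ℤ) (L : ModuleCat.{0} R)
    {m k l : ℤ} (hk : k = m+1) (hl : l = m-1)
    (H : ∀ g : C.X m ⟶ L, C.d k m ≫ g = 0 → ∃ h : C.X l ⟶ L, C.d m l ≫ h = g) :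
    Lifts C L m := by
  subst hk; subst hl; exact H

theorem extVanish_iff_lifts (C : ChainComplex (ModuleCat.{0} R) ℤ)
    (hP : ∀ n, Projective (C.X n)) (hE : ∀ n, (C.sc n).Exact) (n0 : ℤ)
    (L : ModuleCat.{0} R) (i : ℕ) (m : ℤ) (hm : m = n0 + 2 + i) :
    ExtVanish (i+1) (kernel (C.d n0 (n0-1))) L ↔ Lifts C L m := by
  obtain rfl : m = eIdx n0 (i+1) := by rw [hm]; simp [eIdx]; push_cast; ring
  unfold ExtVanish
  rw [subsingleton_iff_isZero]
  rw [((resolution C hP hE n0).isoExt (i+1) L).isZero_iff]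
  rw [← HomologicalComplex.exactAt_iff_isZero_homology]
  rw [HomologicalComplex.exactAt_iff' _ i (i+1) (i+2) (by simp) (by simp)]
  rw [ShortComplex.moduleCat_exact_iff]
  have he1 : eIdx n0 i = eIdx n0 (i+1) - 1 := by rw [eIdx_succ]; ring
  constructor
  · intro hvan
    refine lifts_intro C L (l := eIdx n0 i) (eIdx_succ n0 (i+1)) he1 ?_
    intro g hg
    have hsc : (HomologicalComplex.sc'
        ((resolution C hP hE n0).complex.linearYonedaObj ℤ L) i (i+1) (i+2)).g g = 0 := by
      show (resCplx C n0).d (i+1+1) (i+1) ≫ g = 0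
      rw [resCplx_d C n0 (i+1)]
      exact hg
    obtain ⟨h, hh⟩ := hvan g hsc
    have hh2 : (resCplx C n0).d (i+1) i ≫ h = g := hh
    rw [resCplx_d C n0 i] at hh2
    exact ⟨h, hh2⟩
  · intro hl x hx
    have hx2 : (resCplx C n0).d (i+1+1) (i+1) ≫ x = 0 := hx
    rw [resCplx_d C n0 (i+1)] at hx2
    obtain ⟨h, hh⟩ := lifts_elim C L (eIdx_succ n0 (i+1)) he1 hl x hx2
    have hgoal : (resCplx C n0).d (i+1) i ≫ h = x := by
      rw [resCplx_d C n0 i]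
      exact hh
    exact ⟨h, hgoal⟩

theorem lifts_congr {C : ChainComplex (ModuleCat.{0} R) ℤ} {L : ModuleCat.{0} R}
    {m m' : ℤ} (h : m = m') (H : Lifts C L m) : Lifts C L m' := by subst h; exact H

theorem extVanish_of_iso {M N : ModuleCat.{0} R} (e : M ≅ N) (i : ℕ) (L : ModuleCat.{0} R)
    (h : ExtVanish i N L) : ExtVanish i M L := by
  unfold ExtVanish at *
  rw [subsingleton_iff_isZero] at *
  exact h.of_iso (((_root_.Ext ℤ (ModuleCat.{0} R) i).mapIso e.op).app L).symm

theorem lifts_step {𝓛 : Set (ModuleCat.{0} R)} {𝓐 : Set (ModuleCat.{0} Rᵐᵒᵖ)}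
    (hdp : CompleteDualityPair 𝓛 𝓐)
    (hker : ∀ {A B C : ModuleCat.{0} R} (f : A ⟶ B) (g : B ⟶ C),
      SES f g → B ∈ 𝓛 → C ∈ 𝓛 → A ∈ 𝓛)
    (C : ChainComplex (ModuleCat.{0} R) ℤ) (hP : ∀ n, Projective (C.X n))
    (hFlat : ∀ F : ModuleCat.{0} R, IsFlatMod F → ∀ m : ℤ, Lifts C F m)
    {L : ModuleCat.{0} R} (hL : L ∈ 𝓛) (m : ℤ)
    (IH : ∀ L' ∈ 𝓛, Lifts C L' (m+1)) : Lifts C L m := by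
  classical
  intro g hg
  let FL := ModuleCat.of R (↥L →₀ R)
  let eF : FL ⟶ L := ModuleCat.ofHom (Finsupp.linearCombination R id)
  have hesurj : Function.Surjective eF := Finsupp.linearCombination_id_surjective R ↥L
  haveI : Epi eF := (ModuleCat.epi_iff_surjective _).2 hesurj
  let K' := ModuleCat.of R (LinearMap.ker eF.hom)
  let incl : K' ⟶ FL := ModuleCat.ofHom (LinearMap.ker eF.hom).subtype
  have hw : incl ≫ eF = 0 := ModuleCat.hom_ext (LinearMap.ext (fun x => x.2))
  have hses : SES incl eF := by
    refine ⟨hw, ?_⟩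
    refine { exact := ?_, mono_f := ?_, epi_g := ?_ }
    · rw [ShortComplex.moduleCat_exact_iff]
      intro x hx
      exact ⟨⟨x, hx⟩, rfl⟩
    · exact (ModuleCat.mono_iff_injective _).2 (Submodule.injective_subtype _)
    · exact (ModuleCat.epi_iff_surjective _).2 hesurj
  have hK'L : K' ∈ 𝓛 := hker incl eF hses (free_mem_L hdp ↥L) hL
  haveI := hP m
  let ghat : C.X m ⟶ FL := Projective.factorThru g eF
  have hghat : ghat ≫ eF = g := Projective.factorThru_comp g eF
  let g2 : C.X (m+1) ⟶ FL := C.d (m+1) m ≫ ghat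
  have hg2L : ∀ x : C.X (m+1), eF (g2 x) = 0 := by
    intro x
    have h1 : (g2 ≫ eF) x = ((C.d (m+1) m ≫ g) : C.X (m+1) ⟶ L) x := by
      show ((C.d (m+1) m ≫ ghat) ≫ eF) x = _
      rw [Category.assoc, hghat]
    have h2 : ((C.d (m+1) m ≫ g) : C.X (m+1) ⟶ L) x = 0 := by rw [hg]; rfl
    exact h1.trans h2
  let g2' : C.X (m+1) ⟶ K' := ModuleCat.ofHom
    (LinearMap.codRestrict (LinearMap.ker eF.hom) g2.hom
      (fun x => LinearMap.mem_ker.2 (hg2L x)))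
  have hg2' : g2' ≫ incl = g2 := rfl
  haveI : Mono incl := (ModuleCat.mono_iff_injective _).2 (Submodule.injective_subtype _)
  have hcond : C.d (m+1+1) (m+1) ≫ g2' = 0 := by
    rw [← cancel_mono incl, Category.assoc, hg2', zero_comp]
    show C.d (m+1+1) (m+1) ≫ (C.d (m+1) m ≫ ghat) = 0
    rw [← Category.assoc, C.d_comp_d, zero_comp]
  obtain ⟨u, hu⟩ := lifts_elim C K' (k := m+1+1) (l := m) (by ring) (by ring)
    (IH K' hK'L) g2' hcond
  let ghat2 : C.X m ⟶ FL := ghat - u ≫ incl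
  have hcond2 : C.d (m+1) m ≫ ghat2 = 0 := by
    show C.d (m+1) m ≫ (ghat - u ≫ incl) = 0
    rw [Preadditive.comp_sub, ← Category.assoc, hu, hg2']
    exact sub_self _
  obtain ⟨h', hh'⟩ := hFlat FL (isFlatMod_free ↥L) m ghat2 hcond2
  refine ⟨h' ≫ eF, ?_⟩
  rw [← Category.assoc, hh']
  show (ghat - u ≫ incl) ≫ eF = g
  rw [Preadditive.sub_comp, hghat, Category.assoc, hw, comp_zero, sub_zero]

/-- if 𝓛 is closed under kernels of epimorphisms, then
GP = (Ding projectives) ∩ ⊥∞𝓛. -/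
theorem stmt3
    (R : Type) [Ring R] (𝓛 : Set (ModuleCat.{0} R)) (𝓐 : Set (ModuleCat.{0} Rᵐᵒᵖ))
    (hdp : CompleteDualityPair 𝓛 𝓐)
    (hker : ∀ {A B C : ModuleCat.{0} R} (f : A ⟶ B) (g : B ⟶ C),
      SES f g → B ∈ 𝓛 → C ∈ 𝓛 → A ∈ 𝓛) :
    ∀ M : ModuleCat.{0} R,
      IsGProj 𝓛 M ↔
        (IsGProj {F : ModuleCat.{0} R | IsFlatMod F} M ∧
          ∀ L ∈ 𝓛, ∀ i : ℕ, 1 ≤ i → ExtVanish i M L) := by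
  intro M
  constructor
  · rintro ⟨C, htot, n, ⟨e⟩⟩
    constructor
    · exact ⟨C, ⟨htot.projective, htot.exact,
        fun T hT => htot.homExact T (flat_mem_L hdp T hT)⟩, n, ⟨e⟩⟩
    · intro L hL i hi
      obtain ⟨j, rfl⟩ : ∃ j, i = j+1 := ⟨i-1, (Nat.succ_pred_eq_of_pos hi).symm⟩
      refine extVanish_of_iso e (j+1) L ?_
      exact (extVanish_iff_lifts C htot.projective htot.exact n L j (n+2+j) rfl).2
        (fun g hg => htot.homExact L hL (n+2+(j:ℤ)) g hg)
  · rintro ⟨⟨C, hDing, n, ⟨e⟩⟩, hvan⟩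
    have hFlatLifts : ∀ F : ModuleCat.{0} R, IsFlatMod F → ∀ m : ℤ, Lifts C F m :=
      fun F hF m g hg => hDing.homExact F hF m g hg
    have hExtK : ∀ j : ℕ, ∀ T ∈ 𝓛, ExtVanish (j+1) (kernel (C.d n (n-1))) T :=
      fun j T hT => extVanish_of_iso e.symm (j+1) T (hvan T hT (j+1) (by omega))
    have hHigh : ∀ T ∈ 𝓛, ∀ m : ℤ, n+2 ≤ m → Lifts C T m := by
      intro T hT m hm
      obtain ⟨j, hj⟩ : ∃ j : ℕ, m = n + 2 + j := ⟨(m - (n+2)).toNat, by omega⟩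
      exact (extVanish_iff_lifts C hDing.projective hDing.exact n T j m hj).1 (hExtK j T hT)
    have hAll : ∀ j : ℕ, ∀ L ∈ 𝓛, Lifts C L (n+2-j) := by
      intro j
      induction j with
      | zero => exact fun L hL => hHigh L hL _ (by omega)
      | succ j ih =>
        intro L hL
        exact lifts_step hdp (fun f g => hker f g) C hDing.projective hFlatLifts hL
          (n+2-(j+1:ℕ)) (fun L' hL' => lifts_congr (by push_cast; ring) (ih L' hL'))
    refine ⟨C, ⟨hDing.projective, hDing.exact, ?_⟩, n, ⟨e⟩⟩
    intro T hT m
    by_cases hm : n + 2 ≤ m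
    · exact hHigh T hT m hm
    · exact fun g hg =>
        lifts_congr (m := n+2-((n+2-m).toNat : ℤ)) (by omega)
        (hAll (n+2-m).toNat T hT) g hg

end DualityPaper
end

section
/- Suppose the class 𝓛 of a complete duality pair (L,A) is closed under kernels of epimorphisms. Then a module is Gorenstein (L,A)-projective if and only if it is Gorenstein projective and satisfies Extⁱ_R(−, L) = 0 for all L ∈ 𝓛 and all i ≥ 1. -/
open CategoryTheory CategoryTheory.Limits DirectSum

namespace DualityPaper

variable {R : Type} [Ring R]

variable {R : Type} [Ring R]

/-- generalized Hom-exactness of a complex at position `b` w.r.t. maps into `L`. -/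
def HomExtG (D : ChainComplex (ModuleCat.{0} R) ℤ) (L : ModuleCat.{0} R) (a b c : ℤ) : Prop :=
  ∀ g : D.X b ⟶ L, D.d a b ≫ g = 0 → ∃ h : D.X c ⟶ L, D.d b c ≫ h = g

lemma homExtG_congr (D : ChainComplex (ModuleCat.{0} R) ℤ) (L : ModuleCat.{0} R)
    {a a' b c c' : ℤ} (ha : a = b + 1) (ha' : a' = b + 1) (hc : c = b - 1) (hc' : c' = b - 1) :
    HomExtG D L a b c ↔ HomExtG D L a' b c' := by
  subst ha; subst ha'; subst hc; subst hc'; rfl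

/-- element-level exactness -/
lemma exact_el (D : ChainComplex (ModuleCat.{0} R) ℤ) (hexact : ∀ m, (D.sc m).Exact)
    {a b c : ℤ} (hab : a = b + 1) (hcb : c = b - 1) :
    ∀ x : D.X b, D.d b c x = 0 → ∃ y : D.X a, D.d a b y = x := by
  subst hab; subst hcb
  intro x hx
  have h := (HomologicalComplex.exactAt_iff' D (b+1) b (b-1)
    (by simp [ChainComplex.prev]) (by simp [ChainComplex.next])).1
    ((HomologicalComplex.exactAt_iff D b).2 (hexact b))
  exact (ShortComplex.moduleCat_exact_iff _).1 h x hx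


variable {R : Type} [Ring R]

variable (D : ChainComplex (ModuleCat.{0} R) ℤ) (n : ℤ)

/-- the truncation `... → D.X (n+2) → D.X (n+1)` reindexed over ℕ. -/
noncomputable def tr : ChainComplex (ModuleCat.{0} R) ℕ :=
  ChainComplex.of (fun j => D.X (n + 1 + j)) (fun j => D.d (n + 1 + (j + 1 : ℕ)) (n + 1 + j))
    (fun j => D.d_comp_d _ _ _)

@[simp] lemma tr_X (j : ℕ) : (tr D n).X j = D.X (n + 1 + j) := rfl

lemma tr_d (j : ℕ) : (tr D n).d (j + 1) j = D.d (n + 1 + (j + 1 : ℕ)) (n + 1 + j) :=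
  ChainComplex.of_d (fun j : ℕ => D.X (n + 1 + j)) (fun j : ℕ => D.d (n + 1 + (j + 1 : ℕ)) (n + 1 + j)) j

/-- the concrete kernel module. -/
noncomputable def Kc : ModuleCat.{0} R := ModuleCat.of R (LinearMap.ker (D.d n (n - 1)).hom)

/-- the augmentation. -/
noncomputable def aug : (tr D n).X 0 ⟶ Kc D n :=
  ModuleCat.ofHom (LinearMap.codRestrict _ (D.d (n + 1 + ((0 : ℕ) : ℤ)) n).hom (fun x =>
    LinearMap.mem_ker.mpr (ConcreteCategory.congr_hom (D.d_comp_d (n + 1 + ((0 : ℕ) : ℤ)) n (n - 1)) x)))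

lemma aug_w : (tr D n).d 1 0 ≫ aug D n = 0 := by
  have h : (tr D n).d 1 0 = D.d (n + 1 + ((1 : ℕ) : ℤ)) (n + 1 + ((0 : ℕ) : ℤ)) := tr_d D n 0
  rw [h]
  apply ModuleCat.hom_ext; apply LinearMap.ext; intro x
  apply Subtype.ext
  exact ConcreteCategory.congr_hom
    (D.d_comp_d (n + 1 + ((1 : ℕ) : ℤ)) (n + 1 + ((0 : ℕ) : ℤ)) n) x

lemma aug_surj (hexact : ∀ m, (D.sc m).Exact) : Function.Surjective (aug D n) := by
  rintro ⟨z, hz⟩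
  obtain ⟨y, hy⟩ := exact_el D hexact (a := n + 1 + ((0 : ℕ) : ℤ)) (b := n) (c := n - 1)
    (by push_cast; ring) rfl z (LinearMap.mem_ker.mp hz)
  exact ⟨y, Subtype.ext hy⟩

lemma aug_exact (hexact : ∀ m, (D.sc m).Exact) :
    (ShortComplex.mk ((tr D n).d 1 0) (aug D n) (aug_w D n)).Exact := by
  rw [ShortComplex.moduleCat_exact_iff]
  intro x hx
  have hx' : D.d (n + 1 + ((0 : ℕ) : ℤ)) n x = 0 := by have := congrArg Subtype.val hx; exact this
  obtain ⟨y, hy⟩ := exact_el D hexact (a := n + 1 + ((1 : ℕ) : ℤ)) (b := n + 1 + ((0 : ℕ) : ℤ))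
    (c := n) (by push_cast; ring) (by push_cast; ring) x hx'
  refine ⟨y, ?_⟩
  show ((tr D n).d 1 0) y = x
  have h : (tr D n).d 1 0 = D.d (n + 1 + ((1 : ℕ) : ℤ)) (n + 1 + ((0 : ℕ) : ℤ)) := tr_d D n 0
  rw [h]; exact hy

lemma tr_exactAt_succ (hexact : ∀ m, (D.sc m).Exact) (j : ℕ) :
    (tr D n).ExactAt (j + 1) := by
  rw [HomologicalComplex.exactAt_iff' _ (j + 1 + 1) (j + 1) j (by simp) (by simp)]
  have e : (tr D n).sc' (j + 1 + 1) (j + 1) j ≅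
      ShortComplex.mk (D.d (n + 1 + ((j + 1 + 1 : ℕ) : ℤ)) (n + 1 + ((j + 1 : ℕ) : ℤ)))
        (D.d (n + 1 + ((j + 1 : ℕ) : ℤ)) (n + 1 + ((j : ℕ) : ℤ))) (D.d_comp_d _ _ _) := by
    refine ShortComplex.isoMk (Iso.refl _) (Iso.refl _) (Iso.refl _) ?_ ?_
    · dsimp
      erw [Category.id_comp, Category.comp_id]
      exact (tr_d D n (j + 1)).symm
    · dsimp
      erw [Category.id_comp, Category.comp_id]
      exact (tr_d D n j).symm
  rw [ShortComplex.exact_iff_of_iso e, ShortComplex.moduleCat_exact_iff]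
  intro x hx
  exact exact_el D hexact (a := n + 1 + ((j + 1 + 1 : ℕ) : ℤ)) (b := n + 1 + ((j + 1 : ℕ) : ℤ))
    (c := n + 1 + ((j : ℕ) : ℤ)) (by push_cast; ring) (by push_cast; ring) x hx

/-- the projective resolution of `Kc D n` obtained by truncating `D`. -/
noncomputable def trRes (hproj : ∀ m, Projective (D.X m)) (hexact : ∀ m, (D.sc m).Exact) :
    ProjectiveResolution (Kc D n) where
  complex := tr D n
  projective := fun j => hproj (n + 1 + j)
  π := (ChainComplex.toSingle₀Equiv (tr D n) (Kc D n)).symm ⟨aug D n, aug_w D n⟩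
  quasiIso := ⟨fun i => by
    match i with
    | 0 =>
      rw [ChainComplex.quasiIsoAt₀_iff, ShortComplex.quasiIso_iff_of_zeros']
      · refine (ShortComplex.exact_and_epi_g_iff_of_iso ?_).2
          ⟨aug_exact D n hexact, (ModuleCat.epi_iff_surjective _).2 (aug_surj D n hexact)⟩
        exact ShortComplex.isoMk (Iso.refl _) (Iso.refl _) (Iso.refl _)
          (by rfl) (by simp [ChainComplex.toSingle₀Equiv]; rfl)
      all_goals rfl
    | (j + 1) =>
      rw [quasiIsoAt_iff_exactAt']
      · exact tr_exactAt_succ D n hexact j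
      · exact ChainComplex.exactAt_succ_single_obj _ _⟩

/-- transfer Subsingleton along an iso of modules -/
def isoToEquiv {S : Type} [Ring S] {M N : ModuleCat.{0} S} (e : M ≅ N) : M ≃ N where
  toFun := e.hom
  invFun := e.inv
  left_inv := fun x => ConcreteCategory.congr_hom e.hom_inv_id x
  right_inv := fun x => ConcreteCategory.congr_hom e.inv_hom_id x

lemma isZero_iff_subsingleton {S : Type} [Ring S] (M : ModuleCat.{0} S) :
    Limits.IsZero M ↔ Subsingleton M := by
  constructor
  · intro h
    have h0 : (𝟙 M : M ⟶ M) = 0 := h.eq_of_src _ _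
    exact ⟨fun a b => by
      have ha : a = 0 := ConcreteCategory.congr_hom h0 a
      have hb : b = 0 := ConcreteCategory.congr_hom h0 b
      rw [ha, hb]⟩
  · intro h
    exact ModuleCat.isZero_of_subsingleton M

lemma extVanish_congr {M N : ModuleCat.{0} R} (e : M ≅ N) (k : ℕ) (L : ModuleCat.{0} R) :
    ExtVanish k N L → ExtVanish k M L := by
  intro h
  have iso : ((_root_.Ext ℤ (ModuleCat.{0} R) k).obj (Opposite.op M)).obj L ≅
      ((_root_.Ext ℤ (ModuleCat.{0} R) k).obj (Opposite.op N)).obj L :=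
    (((_root_.Ext ℤ (ModuleCat.{0} R) k).mapIso e.op).app L).symm
  exact (Equiv.subsingleton_congr (isoToEquiv iso)).2 h

/-- THE BRIDGE: `Ext^{i+1}(Kc, L)` vanishes iff `Hom(D, L)` is exact at position `n+1+(i+1)`. -/
lemma extVanish_iff_bridge (hproj : ∀ m, Projective (D.X m)) (hexact : ∀ m, (D.sc m).Exact)
    (L : ModuleCat.{0} R) (i : ℕ) :
    ExtVanish (i + 1) (Kc D n) L ↔
      HomExtG D L (n + 1 + ((i + 1 + 1 : ℕ) : ℤ)) (n + 1 + ((i + 1 : ℕ) : ℤ))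
        (n + 1 + ((i : ℕ) : ℤ)) := by
  have iso := (trRes D n hproj hexact).isoExt (R := ℤ) (i + 1) L
  set H := ((tr D n).linearYonedaObj ℤ L) with hH
  have step1 : ExtVanish (i + 1) (Kc D n) L ↔ Subsingleton (H.homology (i + 1)) :=
    Equiv.subsingleton_congr (isoToEquiv iso)
  have step2 : Subsingleton (H.homology (i + 1)) ↔ H.ExactAt (i + 1) := by
    rw [H.exactAt_iff_isZero_homology, isZero_iff_subsingleton]
  have e2 : (tr D n).d (i + 1 + 1) (i + 1)
      = D.d (n + 1 + ((i + 1 + 1 : ℕ) : ℤ)) (n + 1 + ((i + 1 : ℕ) : ℤ)) := tr_d D n (i + 1)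
  have e1 : (tr D n).d (i + 1) i
      = D.d (n + 1 + ((i + 1 : ℕ) : ℤ)) (n + 1 + ((i : ℕ) : ℤ)) := tr_d D n i
  have step3 : H.ExactAt (i + 1) ↔ HomExtG D L (n + 1 + ((i + 1 + 1 : ℕ) : ℤ))
      (n + 1 + ((i + 1 : ℕ) : ℤ)) (n + 1 + ((i : ℕ) : ℤ)) := by
    rw [HomologicalComplex.exactAt_iff' _ i (i + 1) (i + 1 + 1) (by simp) (by simp)]
    constructor
    · intro h g hg
      obtain ⟨f, hf⟩ := (ShortComplex.moduleCat_exact_iff _).1 h g (by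
        show (tr D n).d (i + 1 + 1) (i + 1) ≫ g = 0
        rw [e2]; exact hg)
      refine ⟨f, ?_⟩
      have : (tr D n).d (i + 1) i ≫ f = g := hf
      rw [e1] at this; exact this
    · intro h
      rw [ShortComplex.moduleCat_exact_iff]
      intro g hg
      obtain ⟨f, hf⟩ := h g (by
        have : (tr D n).d (i + 1 + 1) (i + 1) ≫ g = 0 := hg
        rw [e2] at this; exact this)
      refine ⟨f, ?_⟩
      show (tr D n).d (i + 1) i ≫ f = g
      rw [e1]; exact hf
  rw [step1, step2, step3]

lemma proj_mem_L {𝓛 : Set (ModuleCat.{0} R)} {𝓐 : Set (ModuleCat.{0} Rᵐᵒᵖ)}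
    (hdp : CompleteDualityPair 𝓛 𝓐) {P : ModuleCat.{0} R} (hP : Projective P) : P ∈ 𝓛 := by
  classical
  have hmod : Module.Projective R P := by
    rw [IsProjective.iff_projective]
    exact hP
  obtain ⟨s, hs⟩ := Module.projective_def.1 hmod
  have hF : ModuleCat.of R (⨁ (_ : ↑P), (ModuleCat.of R R : ModuleCat.{0} R)) ∈ 𝓛 :=
    hdp.coprod_L ↑P (fun _ => ModuleCat.of R R) (fun _ => hdp.self_mem)
  refine hdp.summands_L _ hF P
    (show (P ⟶ ModuleCat.of R (⨁ (_ : ↑P), (ModuleCat.of R R : ModuleCat.{0} R))) from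
      ModuleCat.ofHom ((finsuppLEquivDirectSum R R ↑P).toLinearMap.comp s))
    (show (ModuleCat.of R (⨁ (_ : ↑P), (ModuleCat.of R R : ModuleCat.{0} R)) ⟶ P) from
      ModuleCat.ofHom ((Finsupp.linearCombination R _root_.id).comp
        (finsuppLEquivDirectSum R R ↑P).symm.toLinearMap)) ?_
  apply ModuleCat.hom_ext; apply LinearMap.ext
  intro x
  show (Finsupp.linearCombination R _root_.id)
    ((finsuppLEquivDirectSum R R ↑P).symm ((finsuppLEquivDirectSum R R ↑P) (s x))) = x
  rw [LinearEquiv.symm_apply_apply]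
  exact hs x

lemma ker_mem_L {𝓛 : Set (ModuleCat.{0} R)} {𝓐 : Set (ModuleCat.{0} Rᵐᵒᵖ)}
    (hdp : CompleteDualityPair 𝓛 𝓐)
    (hker : ∀ {A B C : ModuleCat.{0} R} (f : A ⟶ B) (g : B ⟶ C),
      SES f g → B ∈ 𝓛 → C ∈ 𝓛 → A ∈ 𝓛)
    {L P₀ : ModuleCat.{0} R} (π₀ : P₀ ⟶ L) (hs : Function.Surjective π₀)
    (hP₀ : Projective P₀) (hL : L ∈ 𝓛) :
    ModuleCat.of R (LinearMap.ker π₀.hom) ∈ 𝓛 := by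
  refine hker (show (ModuleCat.of R (LinearMap.ker π₀.hom) ⟶ P₀) from ModuleCat.ofHom (LinearMap.ker π₀.hom).subtype)
    π₀ ⟨?_, ?_⟩ (proj_mem_L hdp hP₀) hL
  case refine_1 =>
    apply ModuleCat.hom_ext; apply LinearMap.ext
    rintro ⟨x, hx⟩
    show π₀ x = 0
    exact LinearMap.mem_ker.mp hx
  case refine_2 =>
    refine { exact := ?_, mono_f := ?_, epi_g := ?_ }
    · rw [ShortComplex.moduleCat_exact_iff]
      intro x hx
      refine ⟨⟨x, LinearMap.mem_ker.mpr hx⟩, ?_⟩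
      rfl
    · rw [ModuleCat.mono_iff_injective]
      exact Subtype.val_injective
    · rw [ModuleCat.epi_iff_surjective]
      exact hs

lemma free_cover (L : ModuleCat.{0} R) :
    ∃ (P₀ : ModuleCat.{0} R) (π₀ : P₀ ⟶ L), Projective P₀ ∧ Function.Surjective π₀ := by
  refine ⟨ModuleCat.of R (↑L →₀ R),
    show (ModuleCat.of R (↑L →₀ R) ⟶ L) from ModuleCat.ofHom (Finsupp.linearCombination R _root_.id), ?_, ?_⟩
  · rw [← IsProjective.iff_projective]
    infer_instance
  · intro x
    refine ⟨Finsupp.single x 1, ?_⟩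
    show (Finsupp.linearCombination R _root_.id) (Finsupp.single x 1) = x
    simp

/-- The dimension-shifting diagram chase. -/
lemma claimS (D : ChainComplex (ModuleCat.{0} R) ℤ) (hproj : ∀ m, Projective (D.X m))
    {b : ℤ} (L P₀ : ModuleCat.{0} R) (π₀ : P₀ ⟶ L) (hs : Function.Surjective π₀)
    (hP : HomExtG D P₀ (b + 1) b (b - 1))
    (hK : HomExtG D (ModuleCat.of R (LinearMap.ker π₀.hom)) (b + 1 + 1) (b + 1) b) :
    HomExtG D L (b + 1) b (b - 1) := by
  intro g hg
  haveI : Epi π₀ := (ModuleCat.epi_iff_surjective _).mpr hs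
  haveI : Projective (D.X b) := hproj b
  obtain ⟨g', hg'⟩ : ∃ g' : D.X b ⟶ P₀, g' ≫ π₀ = g :=
    ⟨Projective.factorThru g π₀, Projective.factorThru_comp g π₀⟩
  let u : D.X (b + 1) ⟶ ModuleCat.of R (LinearMap.ker π₀.hom) :=
    ModuleCat.ofHom (LinearMap.codRestrict _ (D.d (b + 1) b ≫ g').hom (fun x => LinearMap.mem_ker.mpr (by
      have h1 : π₀ (g' ((D.d (b + 1) b) x)) = g ((D.d (b + 1) b) x) :=
        ConcreteCategory.congr_hom hg' ((D.d (b + 1) b) x)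
      have h2 : (D.d (b + 1) b ≫ g) x = 0 := ConcreteCategory.congr_hom hg x
      exact h1.trans h2)))
  have hu : D.d (b + 1 + 1) (b + 1) ≫ u = 0 := by
    apply ModuleCat.hom_ext; apply LinearMap.ext
    intro x
    apply Subtype.ext
    show g' ((D.d (b + 1) b) ((D.d (b + 1 + 1) (b + 1)) x)) = 0
    have hdd : (D.d (b + 1) b) ((D.d (b + 1 + 1) (b + 1)) x) = 0 :=
      ConcreteCategory.congr_hom (D.d_comp_d (b + 1 + 1) (b + 1) b) x
    rw [hdd, map_zero]
  obtain ⟨v, hv⟩ := hK u hu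
  have hsub : (u : D.X (b + 1) ⟶ ModuleCat.of R (LinearMap.ker π₀.hom)) ≫
      (show (ModuleCat.of R (LinearMap.ker π₀.hom) ⟶ P₀) from ModuleCat.ofHom (LinearMap.ker π₀.hom).subtype)
      = D.d (b + 1) b ≫ g' := rfl
  obtain ⟨h', hh'⟩ := hP
    (g' - v ≫ (show (ModuleCat.of R (LinearMap.ker π₀.hom) ⟶ P₀) from ModuleCat.ofHom (LinearMap.ker π₀.hom).subtype))
    (by
      rw [Preadditive.comp_sub, ← Category.assoc, hv, hsub, sub_self])
  refine ⟨h' ≫ π₀, ?_⟩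
  rw [← Category.assoc, hh', Preadditive.sub_comp, Category.assoc]
  have hz : (show (ModuleCat.of R (LinearMap.ker π₀.hom) ⟶ P₀) from ModuleCat.ofHom (LinearMap.ker π₀.hom).subtype)
      ≫ π₀ = 0 := by
    apply ModuleCat.hom_ext; apply LinearMap.ext
    rintro ⟨x, hx⟩
    show π₀ x = 0
    exact LinearMap.mem_ker.mp hx
  rw [hz, Limits.comp_zero, sub_zero, hg']

/-- if 𝓛 is closed under kernels of epimorphisms, then
GP = (Gorenstein projectives) ∩ ⊥∞𝓛. -/
theorem stmt4
    (R : Type) [Ring R] (𝓛 : Set (ModuleCat.{0} R)) (𝓐 : Set (ModuleCat.{0} Rᵐᵒᵖ))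
    (hdp : CompleteDualityPair 𝓛 𝓐)
    (hker : ∀ {A B C : ModuleCat.{0} R} (f : A ⟶ B) (g : B ⟶ C),
      SES f g → B ∈ 𝓛 → C ∈ 𝓛 → A ∈ 𝓛) :
    ∀ M : ModuleCat.{0} R,
      IsGProj 𝓛 M ↔
        (IsGProj {P : ModuleCat.{0} R | Projective P} M ∧
          ∀ L ∈ 𝓛, ∀ i : ℕ, 1 ≤ i → ExtVanish i M L) := by
  intro M
  constructor
  · rintro ⟨C, hC, n, ⟨e⟩⟩
    have hproj := hC.projective
    have hexact := hC.exact
    constructor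
    · exact ⟨C, ⟨hC.projective, hC.exact,
        fun T hT => hC.homExact T (proj_mem_L hdp hT)⟩, n, ⟨e⟩⟩
    · intro L hL i hi
      obtain ⟨i', rfl⟩ : ∃ i', i = i' + 1 := ⟨i - 1, by omega⟩
      have e2 : M ≅ Kc C n := e ≪≫ ModuleCat.kernelIsoKer (C.d n (n - 1))
      refine extVanish_congr e2 (i' + 1) L ?_
      rw [extVanish_iff_bridge C n hproj hexact L i']
      rw [homExtG_congr C L (b := n + 1 + ((i' + 1 : ℕ) : ℤ))
        (by push_cast; ring) rfl (by push_cast; ring) rfl]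
      exact fun g hg => hC.homExact L hL (n + 1 + ((i' + 1 : ℕ) : ℤ)) g hg
  · rintro ⟨⟨C, hC, n, ⟨e⟩⟩, hExt⟩
    have hproj := hC.projective
    have hexact := hC.exact
    have e2 : M ≅ Kc C n := e ≪≫ ModuleCat.kernelIsoKer (C.d n (n - 1))
    have base : ∀ L, L ∈ 𝓛 → ∀ b : ℤ, n + 2 ≤ b → HomExtG C L (b + 1) b (b - 1) := by
      intro L hL b hb
      obtain ⟨i', hbi⟩ : ∃ i' : ℕ, b = n + 1 + ((i' + 1 : ℕ) : ℤ) := by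
        refine ⟨(b - n - 2).toNat, ?_⟩
        push_cast [Int.toNat_of_nonneg (show (0 : ℤ) ≤ b - n - 2 by omega)]
        omega
      subst hbi
      have hv : ExtVanish (i' + 1) (Kc C n) L :=
        extVanish_congr e2.symm (i' + 1) L (hExt L hL (i' + 1) (by omega))
      rw [extVanish_iff_bridge C n hproj hexact L i'] at hv
      exact (homExtG_congr C L (by push_cast; ring) rfl (by push_cast; ring) rfl).1 hv
    have main : ∀ (k : ℕ) (L : ModuleCat.{0} R), L ∈ 𝓛 → ∀ b : ℤ, n + 2 ≤ b + k →
        HomExtG C L (b + 1) b (b - 1) := by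
      intro k
      induction k with
      | zero =>
        intro L hL b hb
        exact base L hL b (by push_cast at hb; omega)
      | succ k ih =>
        intro L hL b hb
        obtain ⟨P₀, π₀, hP₀, hs⟩ := free_cover L
        refine claimS C hproj L P₀ π₀ hs (fun g hg => hC.homExact P₀ hP₀ b g hg) ?_
        have hKmem : ModuleCat.of R (LinearMap.ker π₀.hom) ∈ 𝓛 :=
          ker_mem_L hdp hker π₀ hs hP₀ hL
        have h1 := ih (ModuleCat.of R (LinearMap.ker π₀.hom)) hKmem (b + 1)
          (by push_cast at hb ⊢; omega)
        exact (homExtG_congr C _ rfl rfl (show b = b + 1 - 1 by ring) rfl).2 h1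
    refine ⟨C, ⟨hproj, hexact, ?_⟩, n, ⟨e⟩⟩
    intro T hT m g hg
    exact main ((n + 2 - m).toNat) T hT m
      (by have := Int.self_le_toNat (n + 2 - m); omega) g hg


end DualityPaper
end

section
/- A Gorenstein (L,A)-projective module belonging to 𝓛 is projective. -/
open CategoryTheory CategoryTheory.Limits DirectSum

namespace DualityPaper

variable {R : Type} [Ring R]

/-- Projective objects are closed under retracts. -/
theorem projOfRetract {C : Type*} [Category C] {K P : C} (i : K ⟶ P) (p : P ⟶ K)
    (hip : i ≫ p = 𝟙 K) (hP : Projective P) : Projective K := by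
  constructor
  intro E X f e he
  obtain ⟨l, hl⟩ := hP.factors (p ≫ f) e
  exact ⟨i ≫ l, by rw [Category.assoc, hl, ← Category.assoc, hip, Category.id_comp]⟩

theorem stmt7
    (R : Type) [Ring R] (𝓛 : Set (ModuleCat.{0} R)) (𝓐 : Set (ModuleCat.{0} Rᵐᵒᵖ))
    (hdp : CompleteDualityPair 𝓛 𝓐) (M : ModuleCat.{0} R) (hM : IsGProj 𝓛 M) (hL : M ∈ 𝓛) :
    Projective M := by
  obtain ⟨C, hC, n, ⟨e⟩⟩ := hM
  set K : ModuleCat.{0} R := kernel (C.d n (n - 1)) with hKdef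
  have hK : K ∈ 𝓛 := hdp.isoClosed_L e hL
  -- the lift of `C.d (n+1) n` to the kernel
  have hdd : C.d (n + 1) n ≫ C.d n (n - 1) = 0 := C.d_comp_d _ _ _
  set π : C.X (n + 1) ⟶ K := kernel.lift (C.d n (n - 1)) (C.d (n + 1) n) hdd with hπdef
  have hπι : π ≫ kernel.ι (C.d n (n - 1)) = C.d (n + 1) n := kernel.lift_ι _ _ _
  -- `π` is an epimorphism by exactness at `n`
  have hex : (C.sc' (n + 1) n (n - 1)).Exact :=
    (HomologicalComplex.exactAt_iff' C (n + 1) n (n - 1)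
      (ChainComplex.prev ℤ n) (ChainComplex.next ℤ n)).mp (hC.exact n)
  have hepi : Epi π := by
    have := (ShortComplex.exact_iff_epi_kernel_lift (C.sc' (n + 1) n (n - 1))).mp hex
    exact this
  -- `π` is killed by the previous differential
  have hzero : C.d (n + 1 + 1) (n + 1) ≫ π = 0 := by
    rw [← cancel_mono (kernel.ι (C.d n (n - 1)))]
    rw [Category.assoc, hπι, C.d_comp_d, zero_comp]
  -- use total acyclicity with `T = K`
  obtain ⟨h, hh⟩ := hC.homExact K hK (n + 1) π hzero
  -- correct the index `n + 1 - 1` to `n`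
  have rel1 : (ComplexShape.down ℤ).Rel (n + 1) n := by simp
  have rel2 : (ComplexShape.down ℤ).Rel (n + 1) (n + 1 - 1) := by
    show n + 1 - 1 + 1 = n + 1
    ring
  have hd' : C.d (n + 1) n ≫ eqToHom (congr_arg C.X ((ComplexShape.down ℤ).next_eq rel1 rel2)) =
      C.d (n + 1) (n + 1 - 1) := C.d_comp_eqToHom rel2 rel1
  set r : C.X n ⟶ K :=
    eqToHom (congr_arg C.X ((ComplexShape.down ℤ).next_eq rel1 rel2)) ≫ h with hrdef
  have hretr : kernel.ι (C.d n (n - 1)) ≫ r = 𝟙 K := by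
    rw [← cancel_epi π, ← Category.assoc, hπι, hrdef, ← Category.assoc, hd', hh,
      Category.comp_id]
  -- `K` is a retract of the projective `C.X n`
  have hKproj : Projective K :=
    projOfRetract (kernel.ι (C.d n (n - 1))) r hretr (hC.projective n)
  exact Projective.of_iso e.symm hKproj

end DualityPaper
end

section
/- A Gorenstein (L,A)-projective module of finite 𝓛-resolution dimension (i.e., admitting a finite resolution by modules in 𝓛) lies in 𝓛, and hence is projective. -/
open CategoryTheory CategoryTheory.Limits DirectSum

namespace DualityPaper

variable {R : Type} [Ring R]

section Stmt8Aux

variable {R : Type} [Ring R] {𝓛 : Set (ModuleCat.{0} R)}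
variable (C : ChainComplex (ModuleCat.{0} R) ℤ)

/-- The syzygy `ker (d : C.X (m+1) ⟶ C.X m)`. -/
@[reducible] noncomputable def Kmod (m : ℤ) : ModuleCat.{0} R := kernel (C.d (m+1) m)

/-- Inclusion of the syzygy. -/
noncomputable def jmap (m : ℤ) : Kmod C (m+1) ⟶ C.X (m+1+1) :=
  kernel.ι (C.d (m+1+1) (m+1))

/-- Corestriction of the differential onto the syzygy. -/
noncomputable def qmap (m : ℤ) : C.X (m+1+1) ⟶ Kmod C m :=
  kernel.lift (C.d (m+1) m) (C.d (m+1+1) (m+1)) (C.d_comp_d _ _ _)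

@[simp] lemma qmap_ι (m : ℤ) :
    qmap C m ≫ kernel.ι (C.d (m+1) m) = C.d (m+1+1) (m+1) :=
  kernel.lift_ι _ _ _

lemma jq_zero (m : ℤ) : jmap C m ≫ qmap C m = 0 := by
  apply zero_of_comp_mono (kernel.ι (C.d (m+1) m))
  rw [Category.assoc, qmap_ι]
  exact kernel.condition _

lemma d_eqToHomX {j j' : ℤ} (i : ℤ) (e : j = j') :
    C.d i j ≫ eqToHom (congrArg C.X e) = C.d i j' := by
  subst e; simp

lemma eqToHomX_d {i i' : ℤ} (e : i = i') (j : ℤ) :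
    eqToHom (congrArg C.X e) ≫ C.d i' j = C.d i j := by
  subst e; simp

lemma epi_qmap (hex : ∀ n : ℤ, (C.sc n).Exact) (m : ℤ) : Epi (qmap C m) := by
  have h1 : (ComplexShape.down ℤ).Rel (m+1+1) (m+1) := rfl
  have h2 : (ComplexShape.down ℤ).Rel (m+1) m := rfl
  have hS : (C.sc' (m+1+1) (m+1) m).Exact :=
    (ShortComplex.exact_iff_of_iso
      (C.isoSc' (m+1+1) (m+1) m ((ComplexShape.down ℤ).prev_eq' h1)
        ((ComplexShape.down ℤ).next_eq' h2))).1 (hex (m+1))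
  exact (ShortComplex.exact_iff_epi_kernel_lift _).1 hS

lemma shortExact_jq (hex : ∀ n : ℤ, (C.sc n).Exact) (m : ℤ) :
    (ShortComplex.mk (jmap C m) (qmap C m) (jq_zero C m)).ShortExact := by
  haveI : Epi (qmap C m) := epi_qmap C hex m
  haveI : Mono (jmap C m) := by
    show Mono (kernel.ι (C.d (m+1+1) (m+1))); infer_instance
  constructor
  refine ShortComplex.exact_of_f_is_kernel _ ?_
  refine KernelFork.IsLimit.ofι _ _
    (fun {W'} g' hg' => kernel.lift (C.d (m+1+1) (m+1)) g' ?_)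
    (fun {W'} g' hg' => kernel.lift_ι _ _ _)
    (fun {W'} g' hg' m' hm' => ?_)
  · rw [← qmap_ι C m, ← Category.assoc]
    change (g' ≫ qmap C m) ≫ _ = 0
    rw [hg', zero_comp]
  · rw [← cancel_mono (jmap C m), hm']
    exact (kernel.lift_ι _ _ _).symm

lemma extend_L (hC : IsTotallyAcyclicWrt 𝓛 C) {T : ModuleCat.{0} R} (hT : T ∈ 𝓛)
    (m : ℤ) (ψ : Kmod C (m+1) ⟶ T) :
    ∃ h : C.X (m+1+1) ⟶ T, jmap C m ≫ h = ψ := by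
  haveI : Epi (qmap C (m+1)) := epi_qmap C hC.exact (m+1)
  have hg : C.d (m+1+1+1+1) (m+1+1+1) ≫ (qmap C (m+1) ≫ ψ) = 0 := by
    have h0 : C.d (m+1+1+1+1) (m+1+1+1) ≫ qmap C (m+1) = 0 := by
      apply zero_of_comp_mono (kernel.ι (C.d (m+1+1) (m+1)))
      rw [Category.assoc, qmap_ι]
      exact C.d_comp_d _ _ _
    rw [← Category.assoc, h0, zero_comp]
  obtain ⟨h, hh⟩ := hC.homExact T hT (m+1+1+1) (qmap C (m+1) ≫ ψ) hg
  have e : (m+1+1 : ℤ) = m+1+1+1-1 := by omega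
  refine ⟨eqToHom (congrArg C.X e) ≫ h, ?_⟩
  rw [← cancel_epi (qmap C (m+1)), ← Category.assoc]
  have hq : qmap C (m+1) ≫ jmap C m = C.d (m+1+1+1) (m+1+1) := qmap_ι C (m+1)
  rw [hq, ← Category.assoc, d_eqToHomX C _ e, hh]

lemma liftRes (hC : IsTotallyAcyclicWrt 𝓛 C) :
    ∀ (n : ℕ) (X : ModuleCat.{0} R), ResDimLE 𝓛 n X →
      ∀ (m : ℤ) (ψ : Kmod C (m+1) ⟶ X), ∃ h : C.X (m+1+1) ⟶ X, jmap C m ≫ h = ψ := by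
  intro n
  induction n with
  | zero => exact fun X hX m ψ => extend_L C hC hX m ψ
  | succ n ih =>
    intro X hX m ψ
    obtain ⟨K, L, f, g, hL, ⟨w, hSE⟩, hK⟩ := hX
    haveI := hSE.epi_g
    haveI := hSE.mono_f
    haveI : Projective (C.X (m+1+1+1)) := hC.projective _
    set α : C.X (m+1+1+1) ⟶ L := Projective.factorThru (qmap C (m+1) ≫ ψ) g with hαdef
    have hα : α ≫ g = qmap C (m+1) ≫ ψ := Projective.factorThru_comp _ _
    have hjαg : (jmap C (m+1) ≫ α) ≫ g = 0 := by
      rw [Category.assoc, hα, ← Category.assoc, jq_zero, zero_comp]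
    obtain ⟨β, hβ⟩ := KernelFork.IsLimit.lift' hSE.exact.fIsKernel (jmap C (m+1) ≫ α) hjαg
    simp only [Fork.ι_ofι] at hβ
    haveI : Epi (qmap C (m+1)) := epi_qmap C hC.exact (m+1)
    obtain ⟨γ, hγ⟩ := ih K hK (m+1) β
    have h0 : jmap C (m+1) ≫ (α - γ ≫ f) = 0 := by
      rw [Preadditive.comp_sub, ← Category.assoc, hγ, hβ, sub_self]
    obtain ⟨δ, hδ⟩ := CokernelCofork.IsColimit.desc'
      (shortExact_jq C hC.exact (m+1)).exact.gIsCokernel (α - γ ≫ f) h0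
    simp only [Cofork.π_ofπ] at hδ
    have hδg : δ ≫ g = ψ := by
      rw [← cancel_epi (qmap C (m+1)), ← Category.assoc]
      change (qmap C (m+1) ≫ δ) ≫ g = _
      rw [hδ, Preadditive.sub_comp, hα, Category.assoc, w, comp_zero, sub_zero]
    obtain ⟨h₀, hh₀⟩ := extend_L C hC hL m δ
    exact ⟨h₀ ≫ g, by rw [← Category.assoc, hh₀, hδg]⟩

lemma splitSES (hC : IsTotallyAcyclicWrt 𝓛 C) {n : ℕ} {X E : ModuleCat.{0} R}
    (hX : ResDimLE 𝓛 n X) (m : ℤ) (f' : X ⟶ E) (g' : E ⟶ Kmod C m)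
    (hse : SES f' g') : ∃ s : Kmod C m ⟶ E, s ≫ g' = 𝟙 (Kmod C m) := by
  obtain ⟨w', hSE'⟩ := hse
  haveI := hSE'.epi_g
  haveI := hSE'.mono_f
  haveI : Projective (C.X (m+1+1)) := hC.projective _
  set φ : C.X (m+1+1) ⟶ E := Projective.factorThru (qmap C m) g' with hφdef
  have hφ : φ ≫ g' = qmap C m := Projective.factorThru_comp _ _
  have hjφ : (jmap C m ≫ φ) ≫ g' = 0 := by
    rw [Category.assoc, hφ, jq_zero]
  obtain ⟨ψ, hψ⟩ := KernelFork.IsLimit.lift' hSE'.exact.fIsKernel (jmap C m ≫ φ) hjφ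
  simp only [Fork.ι_ofι] at hψ
  haveI : Epi (qmap C m) := epi_qmap C hC.exact m
  obtain ⟨h, hh⟩ := liftRes C hC n X hX m ψ
  have h0 : jmap C m ≫ (φ - h ≫ f') = 0 := by
    rw [Preadditive.comp_sub, ← Category.assoc, hh, hψ, sub_self]
  obtain ⟨s, hs⟩ := CokernelCofork.IsColimit.desc'
    (shortExact_jq C hC.exact m).exact.gIsCokernel (φ - h ≫ f') h0
  simp only [Cofork.π_ofπ] at hs
  refine ⟨s, ?_⟩
  rw [← cancel_epi (qmap C m), ← Category.assoc]
  change (qmap C m ≫ s) ≫ g' = _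
  rw [hs, Preadditive.sub_comp, hφ, Category.assoc, w', comp_zero, sub_zero,
    Category.comp_id]

end Stmt8Aux

theorem stmt8
    (R : Type) [Ring R] (𝓛 : Set (ModuleCat.{0} R)) (𝓐 : Set (ModuleCat.{0} Rᵐᵒᵖ))
    (hdp : CompleteDualityPair 𝓛 𝓐) (M : ModuleCat.{0} R) (hM : IsGProj 𝓛 M)
    (hLd : ∃ n : ℕ, ResDimLE 𝓛 n M) :
    M ∈ 𝓛 ∧ Projective M := by
  obtain ⟨C, hC, n₀, ⟨isoM⟩⟩ := hM
  have e1 : (n₀ - 1 + 1 : ℤ) = n₀ := by omega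
  have hd : C.d (n₀-1+1) (n₀-1) = eqToHom (congrArg C.X e1) ≫ C.d n₀ (n₀-1) :=
    (eqToHomX_d C e1 (n₀-1)).symm
  have bridge : Kmod C (n₀-1) ≅ kernel (C.d n₀ (n₀-1)) := by
    show kernel (C.d (n₀-1+1) (n₀-1)) ≅ _
    rw [hd]
    exact kernelIsIsoComp _ _
  set isoK : M ≅ Kmod C (n₀-1) := isoM ≪≫ bridge.symm with hisoK
  obtain ⟨nres, hres⟩ := hLd
  have hmem : M ∈ 𝓛 := by
    cases nres with
    | zero => exact hres
    | succ n =>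
      obtain ⟨K', L, f, g, hL, ⟨w, hSE⟩, hK'⟩ := hres
      haveI := hSE.mono_f
      haveI := hSE.epi_g
      have w2 : f ≫ (g ≫ isoK.hom) = 0 := by
        rw [← Category.assoc, w, zero_comp]
      have hSE2 : (ShortComplex.mk f (g ≫ isoK.hom) w2).ShortExact := by
        haveI : Epi (g ≫ isoK.hom) := epi_comp _ _
        constructor
        exact ShortComplex.exact_of_iso
          ((ShortComplex.isoMk (Iso.refl K') (Iso.refl L) isoK (by simp) (by simp) :
            ShortComplex.mk f g w ≅ ShortComplex.mk f (g ≫ isoK.hom) w2))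
          hSE.exact
      obtain ⟨s, hs⟩ := splitSES C hC hK' (n₀-1) f (g ≫ isoK.hom) ⟨w2, hSE2⟩
      have hsg : s ≫ g = isoK.inv := by
        rw [← cancel_mono isoK.hom, Category.assoc]
        change s ≫ (g ≫ isoK.hom) = _
        rw [hs, Iso.inv_hom_id]
      have hret : (isoK.hom ≫ s) ≫ g = 𝟙 M := by
        rw [Category.assoc, hsg, Iso.hom_inv_id]
      exact hdp.summands_L L hL M (isoK.hom ≫ s) g hret
  refine ⟨hmem, ?_⟩
  have hKmem : Kmod C (n₀-1) ∈ 𝓛 := hdp.isoClosed_L isoK hmem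
  have e2 : (n₀ - 2 + 1 : ℤ) = n₀ - 1 := by omega
  set κ : Kmod C (n₀-2+1) ≅ Kmod C (n₀-1) := eqToIso (congrArg (Kmod C) e2) with hκ
  obtain ⟨h, hh⟩ := extend_L C hC hKmem (n₀-2) κ.hom
  haveI : Projective (C.X (n₀-2+1+1)) := hC.projective _
  set i : M ⟶ C.X (n₀-2+1+1) := isoK.hom ≫ κ.inv ≫ jmap C (n₀-2) with hi
  set r : C.X (n₀-2+1+1) ⟶ M := h ≫ isoK.inv with hr
  have hir : i ≫ r = 𝟙 M := by
    rw [hi, hr, Category.assoc, Category.assoc, ← Category.assoc (jmap C (n₀-2)), hh,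
      ← Category.assoc κ.inv, Iso.inv_hom_id, Category.id_comp, Iso.hom_inv_id]
  refine ⟨fun {E' X'} fM eE => ?_⟩
  exact ⟨i ≫ Projective.factorThru (r ≫ fM) eE, by
    rw [Category.assoc, Projective.factorThru_comp, ← Category.assoc, hir,
      Category.id_comp]⟩

end DualityPaper
end

section
/- If R has finite weak global dimension, then an R-module is Gorenstein (L,A)-projective if and only if it is projective. In particular, over a von Neumann regular ring every Gorenstein (L,A)-projective module is projective. -/
open CategoryTheory CategoryTheory.Limits DirectSum

namespace DualityPaper

variable {R : Type} [Ring R]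

/-! ### Auxiliary lemmas -/

section Aux

variable {R : Type} [Ring R]

instance charLFunLike (M : ModuleCat.{0} R) :
    FunLike (charL M : Type) M (AddCircle (1 : ℚ)) :=
  inferInstanceAs (FunLike (M →+ AddCircle (1 : ℚ)) M (AddCircle (1 : ℚ)))

instance charLHomClass (M : ModuleCat.{0} R) :
    AddMonoidHomClass (charL M : Type) M (AddCircle (1 : ℚ)) :=
  inferInstanceAs (AddMonoidHomClass (M →+ AddCircle (1 : ℚ)) M (AddCircle (1 : ℚ)))

@[ext] lemma charL_ext {M : ModuleCat.{0} R} {φ ψ : (charL M : Type)}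
    (h : ∀ m : M, φ m = ψ m) : φ = ψ :=
  AddMonoidHom.ext h

@[simp] lemma charL_smul_apply {M : ModuleCat.{0} R} (r : Rᵐᵒᵖ) (φ : (charL M : Type)) (m : M) :
    (r • φ) m = φ (r.unop • m) := rfl

@[simp] lemma charL_add_apply {M : ModuleCat.{0} R} (φ ψ : (charL M : Type)) (m : M) :
    (φ + ψ) m = φ m + ψ m := rfl

/-- The character module functor on morphisms. -/
def charMap {M N : ModuleCat.{0} R} (f : M ⟶ N) : charL N ⟶ charL M := ModuleCat.ofHom {
  toFun := fun φ => (φ : N →+ AddCircle (1 : ℚ)).comp f.hom.toAddMonoidHom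
  map_add' := fun φ ψ => rfl
  map_smul' := fun r φ => AddMonoidHom.ext fun m => by
    show φ (r.unop • f m) = φ (f (r.unop • m))
    rw [(ConcreteCategory.hom f).map_smul] }

@[simp] lemma charMap_apply {M N : ModuleCat.{0} R} (f : M ⟶ N)
    (φ : (charL N : Type)) (m : M) : (charMap f φ) m = φ (f m) := rfl

lemma charMap_comp {M N P : ModuleCat.{0} R} (f : M ⟶ N) (g : N ⟶ P) :
    charMap (f ≫ g) = charMap g ≫ charMap f := by
  refine ModuleCat.hom_ext (LinearMap.ext fun φ => ?_)
  rfl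

lemma charMap_id (M : ModuleCat.{0} R) : charMap (𝟙 M) = 𝟙 (charL M) := by
  refine ModuleCat.hom_ext (LinearMap.ext fun φ => ?_)
  rfl

lemma charMap_injective {M N : ModuleCat.{0} R} {f : M ⟶ N} (hf : Function.Surjective f) :
    Function.Injective (charMap f) := by
  intro φ ψ h
  refine charL_ext fun n => ?_
  obtain ⟨m, rfl⟩ := hf n
  exact congrArg (fun (χ : (charL M : Type)) => χ m) h

lemma charMap_surjective {M N : ModuleCat.{0} R} {f : M ⟶ N} (hf : Function.Injective f) :
    Function.Surjective (charMap f) := by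
  intro φ
  obtain ⟨ψ, hψ⟩ := CharacterModule.dual_surjective_of_injective
    (R := ℤ) (f.hom.toAddMonoidHom.toIntLinearMap) hf φ
  exact ⟨ψ, hψ⟩

lemma injective_of_retract {C : Type*} [Category C] {X Q : C} [Injective Q]
    (i : X ⟶ Q) (r : Q ⟶ X) (hir : i ≫ r = 𝟙 X) : Injective X where
  factors g f _ := ⟨Injective.factorThru (g ≫ i) f ≫ r, by
    rw [← Category.assoc, Injective.comp_factorThru, Category.assoc, hir, Category.comp_id]⟩

lemma projective_of_retract {C : Type*} [Category C] {X Q : C} [Projective Q]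
    (i : X ⟶ Q) (r : Q ⟶ X) (hir : i ≫ r = 𝟙 X) : Projective X where
  factors f e _ := ⟨i ≫ Projective.factorThru (r ≫ f) e, by
    rw [Category.assoc, Projective.factorThru_comp, ← Category.assoc, hir, Category.id_comp]⟩

/-- The character module of `R` itself is an injective right module. -/
lemma injective_charL_R : Injective (charL (ModuleCat.of R R)) where
  factors {A B} g f hf := by
    haveI : Mono f := hf
    have hfi : Function.Injective f := (ModuleCat.mono_iff_injective f).mp hf
    obtain ⟨ψ, hψ⟩ := CharacterModule.dual_surjective_of_injective
      (R := ℤ) (f.hom.toAddMonoidHom.toIntLinearMap) hfi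
      (AddMonoidHom.mk' (fun a => g a (1 : R)) (fun a b => by
        show g (a + b) (1 : R) = g a (1 : R) + g b (1 : R)
        rw [map_add]; rfl))
    have hψ' : ∀ a : A, ψ (f a) = g a (1 : R) := fun a => DFunLike.congr_fun hψ a
    refine ⟨ModuleCat.ofHom
            { toFun := fun b => AddMonoidHom.mk' (fun (x : R) => ψ (MulOpposite.op x • b))
                (fun (x y : R) => by
                  show ψ (MulOpposite.op (x + y) • b) =
                    ψ (MulOpposite.op x • b) + ψ (MulOpposite.op y • b)
                  rw [MulOpposite.op_add, add_smul, map_add]),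
              map_add' := ?_, map_smul' := ?_ }, ?_⟩
    · intro b b'
      refine AddMonoidHom.ext fun (x : R) => ?_
      show ψ (MulOpposite.op x • (b + b')) =
        ψ (MulOpposite.op x • b) + ψ (MulOpposite.op x • b')
      rw [smul_add, map_add]
    · intro r b
      refine AddMonoidHom.ext fun (x : R) => ?_
      show ψ (MulOpposite.op x • r • b) = ψ (MulOpposite.op (r.unop * x) • b)
      rw [← mul_smul, MulOpposite.op_mul, MulOpposite.op_unop]
    · refine ModuleCat.hom_ext (LinearMap.ext fun a => AddMonoidHom.ext fun (x : R) => ?_)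
      show ψ (MulOpposite.op x • f a) = g a x
      rw [← (ConcreteCategory.hom f).map_smul, hψ', (ConcreteCategory.hom g).map_smul]
      show g a (x * (1 : R)) = g a x
      rw [mul_one]

/-- The free module on an index type. -/
def FreeMod (ι : Type) : ModuleCat.{0} R := ModuleCat.of R (⨁ _ : ι, R)

/-- The canonical inclusion of the `i`-th summand into the free module. -/
def lofMap (ι : Type) [DecidableEq ι] (i : ι) : ModuleCat.of R R ⟶ FreeMod (R := R) ι :=
  ModuleCat.ofHom (DirectSum.lof R ι (fun _ => R) i : R →ₗ[R] ⨁ _ : ι, R)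

/-- The character module of a free module is injective. -/
lemma injective_charL_free (ι : Type) [DecidableEq ι] : Injective (charL (FreeMod (R := R) ι)) where
  factors {A B} g f hf := by
    haveI : Mono f := hf
    haveI := injective_charL_R (R := R)
    have comp : ∀ i : ι, ∃ h : B ⟶ charL (ModuleCat.of R R),
        f ≫ h = g ≫ charMap (lofMap ι i) := fun i =>
      ⟨Injective.factorThru _ f, Injective.comp_factorThru _ f⟩
    choose hs hcomp using comp
    refine ⟨ModuleCat.ofHom (Y := ↑(charL (FreeMod (R := R) ι)))
            { toFun := fun b => DirectSum.toAddMonoid (fun i => (hs i b : R →+ AddCircle (1:ℚ))),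
              map_add' := ?_, map_smul' := ?_ }, ?_⟩
    · intro b b'
      refine DirectSum.addHom_ext fun i x => ?_
      erw [DirectSum.toAddMonoid_of]
      show (hs i (b + b')) x = (DirectSum.toAddMonoid (fun i => (hs i b : R →+ AddCircle (1:ℚ))) +
        DirectSum.toAddMonoid (fun i => (hs i b' : R →+ AddCircle (1:ℚ)))) (DirectSum.of _ i x)
      rw [(ConcreteCategory.hom (hs i)).map_add]
      show (hs i b) x + (hs i b') x = _
      erw [AddMonoidHom.add_apply, DirectSum.toAddMonoid_of, DirectSum.toAddMonoid_of]
      rfl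
    · intro r b
      refine DirectSum.addHom_ext fun i x => ?_
      erw [DirectSum.toAddMonoid_of]
      show (hs i (r • b)) x =
        (r • DirectSum.toAddMonoid (fun i => (hs i b : R →+ AddCircle (1:ℚ))))
          (DirectSum.of _ i x)
      rw [(ConcreteCategory.hom (hs i)).map_smul, charL_smul_apply]
      show (hs i b) (r.unop • x) =
        (DirectSum.toAddMonoid (fun i => (hs i b : R →+ AddCircle (1:ℚ))))
          (r.unop • DirectSum.of _ i x)
      erw [← DirectSum.of_smul R, DirectSum.toAddMonoid_of]
      rfl
    · refine ModuleCat.hom_ext (LinearMap.ext fun a => DirectSum.addHom_ext fun i x => ?_)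
      show (DirectSum.toAddMonoid (fun i => (hs i (f a) : R →+ AddCircle (1:ℚ))))
        (DirectSum.of _ i x) = g a (DirectSum.of _ i x)
      erw [DirectSum.toAddMonoid_of]
      have h2 : (hs i) (f a) x = (charMap (lofMap ι i)) (g a) x :=
        congrArg (fun (χ : (charL (ModuleCat.of R R) : Type)) => χ x)
          (ConcreteCategory.congr_hom (hcomp i) a)
      refine h2.trans ?_
      show g a (DirectSum.lof R ι (fun _ => R) i x) = g a (DirectSum.of _ i x)
      rw [DirectSum.lof_eq_of]

end Aux

section Aux2

variable {R : Type} [Ring R] {𝓛 : Set (ModuleCat.{0} R)} {𝓐 : Set (ModuleCat.{0} Rᵐᵒᵖ)}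

/-- The canonical surjection from the free module on (the elements of) `M` onto `M`. -/
noncomputable def freeEpi (M : ModuleCat.{0} R) [DecidableEq (M : Type)] :
    FreeMod (R := R) M ⟶ M :=
  ModuleCat.ofHom (DirectSum.toModule R M M (fun m => LinearMap.toSpanSingleton R M m))

lemma freeEpi_surjective (M : ModuleCat.{0} R) [DecidableEq (M : Type)] :
    Function.Surjective (freeEpi M) := by
  intro m
  refine ⟨DirectSum.lof R M (fun _ => R) m 1, ?_⟩
  show DirectSum.toModule R M M _ (DirectSum.lof R M (fun _ => R) m 1) = m
  rw [DirectSum.toModule_lof]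
  exact one_smul R m

lemma freeMod_mem (hdp : CompleteDualityPair 𝓛 𝓐) (ι : Type) : FreeMod (R := R) ι ∈ 𝓛 :=
  hdp.coprod_L ι (fun _ => ModuleCat.of R R) (fun _ => hdp.self_mem)

lemma proj_mem (hdp : CompleteDualityPair 𝓛 𝓐) {P : ModuleCat.{0} R} (hP : Projective P) :
    P ∈ 𝓛 := by
  letI := Classical.decEq (P : Type)
  haveI := hP
  haveI : Epi (freeEpi P) := (ModuleCat.epi_iff_surjective _).mpr (freeEpi_surjective P)
  exact hdp.summands_L (FreeMod P) (freeMod_mem hdp P) P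
    (Projective.factorThru (𝟙 P) (freeEpi P)) (freeEpi P) (Projective.factorThru_comp _ _)

lemma proj_flat {P : ModuleCat.{0} R} (hP : Projective P) : IsFlatMod P := by
  letI := Classical.decEq (P : Type)
  haveI := hP
  haveI : Epi (freeEpi P) := (ModuleCat.epi_iff_surjective _).mpr (freeEpi_surjective P)
  haveI := injective_charL_free (R := R) P
  exact injective_of_retract (charMap (freeEpi P))
    (charMap (Projective.factorThru (𝟙 P) (freeEpi P)))
    (by rw [← charMap_comp, Projective.factorThru_comp, charMap_id])

lemma flat_iso {M N : ModuleCat.{0} R} (e : M ≅ N) (h : IsFlatMod M) : IsFlatMod N := by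
  haveI : Injective (charL M) := h
  exact injective_of_retract (charMap e.hom) (charMap e.inv)
    (by rw [← charMap_comp, e.inv_hom_id, charMap_id])

lemma flat_mem (hdp : CompleteDualityPair 𝓛 𝓐) {M : ModuleCat.{0} R} (h : IsFlatMod M) :
    M ∈ 𝓛 := by
  letI := Classical.decEq (M : Type)
  haveI : Injective (charL M) := h
  haveI : Mono (charMap (freeEpi M)) :=
    (ModuleCat.mono_iff_injective _).mpr (charMap_injective (freeEpi_surjective M))
  refine (hdp.char_mem_iff M).mpr ?_
  exact hdp.summands_A (charL (FreeMod M)) ((hdp.char_mem_iff _).mp (freeMod_mem hdp M))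
    (charL M) (charMap (freeEpi M)) (Injective.factorThru (𝟙 (charL M)) (charMap (freeEpi M)))
    (Injective.comp_factorThru _ _)

lemma flat_prod {M N : ModuleCat.{0} R} (hM : IsFlatMod M) (hN : IsFlatMod N) :
    IsFlatMod (ModuleCat.of R (M × N)) := by
  haveI : Injective (charL M) := hM
  haveI : Injective (charL N) := hN
  constructor
  intro A B g f hf
  haveI : Mono f := hf
  let pl : M ⟶ ModuleCat.of R (M × N) := ModuleCat.ofHom (LinearMap.inl R M N)
  let pr : N ⟶ ModuleCat.of R (M × N) := ModuleCat.ofHom (LinearMap.inr R M N)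
  set h1 := Injective.factorThru (g ≫ charMap pl) f with hh1
  set h2 := Injective.factorThru (g ≫ charMap pr) f with hh2
  have e1 : f ≫ h1 = g ≫ charMap pl := Injective.comp_factorThru _ _
  have e2 : f ≫ h2 = g ≫ charMap pr := Injective.comp_factorThru _ _
  refine ⟨ModuleCat.ofHom (Y := ↑(charL (ModuleCat.of R (M × N))))
          { toFun := fun b => AddMonoidHom.mk' (fun p => h1 b p.1 + h2 b p.2) (fun p q => by
              show h1 b (p.1 + q.1) + h2 b (p.2 + q.2) = _
              rw [map_add, map_add, add_add_add_comm]),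
            map_add' := ?_, map_smul' := ?_ }, ?_⟩
  · intro b b'
    refine charL_ext fun p => ?_
    show h1 (b + b') p.1 + h2 (b + b') p.2 =
      (h1 b p.1 + h2 b p.2) + (h1 b' p.1 + h2 b' p.2)
    rw [map_add, map_add, charL_add_apply, charL_add_apply, add_add_add_comm]
  · intro r b
    refine charL_ext fun p => ?_
    erw [charL_smul_apply]
    show h1 (r • b) p.1 + h2 (r • b) p.2 =
      h1 b (r.unop • p).1 + h2 b (r.unop • p).2
    rw [(ConcreteCategory.hom h1).map_smul, (ConcreteCategory.hom h2).map_smul, charL_smul_apply, charL_smul_apply]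
    rfl
  · refine ModuleCat.hom_ext (LinearMap.ext fun a => charL_ext fun p => ?_)
    show h1 (f a) p.1 + h2 (f a) p.2 = g a p
    have c1 : h1 (f a) p.1 = g a (pl p.1) :=
      congrArg (fun χ : (charL M : Type) => χ p.1) (ConcreteCategory.congr_hom e1 a)
    have c2 : h2 (f a) p.2 = g a (pr p.2) :=
      congrArg (fun χ : (charL N : Type) => χ p.2) (ConcreteCategory.congr_hom e2 a)
    rw [c1, c2, ← map_add]
    congr 1
    show ((p.1, 0) : M × N) + (0, p.2) = p
    refine Prod.ext ?_ ?_
    · show p.1 + 0 = p.1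
      rw [add_zero]
    · show 0 + p.2 = p.2
      rw [zero_add]

lemma flat_ker {B F : ModuleCat.{0} R} (v : B ⟶ F) (hv : Function.Surjective v)
    (hB : IsFlatMod B) (hF : IsFlatMod F) :
    IsFlatMod (ModuleCat.of R (LinearMap.ker v.hom)) := by
  haveI : Injective (charL B) := hB
  haveI : Injective (charL F) := hF
  set K := ModuleCat.of R (LinearMap.ker v.hom) with hK
  set i : K ⟶ B := ModuleCat.ofHom (LinearMap.ker v.hom).subtype with hi
  haveI : Mono (charMap v) := (ModuleCat.mono_iff_injective _).mpr (charMap_injective hv)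
  set r : charL B ⟶ charL F := Injective.factorThru (𝟙 (charL F)) (charMap v) with hr
  have hrv : charMap v ≫ r = 𝟙 (charL F) := Injective.comp_factorThru _ _
  haveI : Epi (charMap i) := (ModuleCat.epi_iff_surjective _).mpr
    (charMap_surjective (Submodule.injective_subtype _))
  set q : charL B ⟶ charL B := 𝟙 (charL B) - (r ≫ charMap v) with hq
  have hker : kernel.ι (charMap i) ≫ q = 0 := by
    refine ModuleCat.hom_ext (LinearMap.ext fun κ => ?_)
    set φ : (charL B : Type) := kernel.ι (charMap i) κ with hφ
    have hφ0 : charMap i φ = 0 := by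
      have h0 := ConcreteCategory.congr_hom (kernel.condition (charMap i)) κ
      rw [hφ]
      exact h0.trans (LinearMap.zero_apply κ)
    have hφker : ∀ x : B, v x = 0 → φ x = 0 := by
      intro x hx
      have h1 := congrArg (fun χ : (charL K : Type) =>
        χ ((⟨x, hx⟩ : LinearMap.ker v.hom) : K)) hφ0
      exact h1
    have hvσ : ∀ y, v (Function.surjInv hv y) = y := fun y => Function.surjInv_eq hv y
    set ψ : (charL F : Type) := AddMonoidHom.mk' (fun y => φ (Function.surjInv hv y))
      (fun y z => by
        have hmem : v (Function.surjInv hv (y + z) -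
            (Function.surjInv hv y + Function.surjInv hv z)) = 0 := by
          rw [map_sub, map_add, hvσ, hvσ, hvσ, sub_self]
        have h0 := hφker _ hmem
        rw [map_sub, map_add, sub_eq_zero] at h0
        exact h0) with hψ
    have hcv : charMap v ψ = φ := by
      refine charL_ext fun b => ?_
      show φ (Function.surjInv hv (v b)) = φ b
      have hmem : v (Function.surjInv hv (v b) - b) = 0 := by rw [map_sub, hvσ, sub_self]
      have h0 := hφker _ hmem
      rw [map_sub, sub_eq_zero] at h0
      exact h0
    show q φ = 0
    rw [← hcv]
    show charMap v ψ - charMap v (r (charMap v ψ)) = 0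
    have : r (charMap v ψ) = ψ := ConcreteCategory.congr_hom hrv ψ
    rw [this, sub_self]
  set s := Abelian.epiDesc (charMap i) q hker with hs
  have hcomp : charMap i ≫ s = q := Abelian.comp_epiDesc _ _ _
  have hretract : s ≫ charMap i = 𝟙 (charL K) := by
    rw [← cancel_epi (charMap i), ← Category.assoc, hcomp, Category.comp_id]
    refine ModuleCat.hom_ext (LinearMap.ext fun φ => ?_)
    have hz : charMap i (charMap v (r φ)) = 0 := by
      refine charL_ext fun k => ?_
      have hk : v (i k) = 0 := k.2
      show (r φ) (v (i k)) = (0 : (charL K : Type)) k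
      rw [hk, map_zero]
      rfl
    show charMap i (φ - charMap v (r φ)) = charMap i φ
    rw [map_sub, hz, sub_zero]
  exact injective_of_retract s (charMap i) hretract

end Aux2

section Aux3

variable {R : Type} [Ring R]

lemma sesOf {A B C : ModuleCat.{0} R} (f : A ⟶ B) (g : B ⟶ C) (hf : Function.Injective f)
    (hg : Function.Surjective g) (hker : ∀ b, g b = 0 ↔ ∃ a, f a = b) : SES f g := by
  have w : f ≫ g = 0 := by
    refine ModuleCat.hom_ext (LinearMap.ext fun a => ?_)
    show g (f a) = (0 : A →ₗ[R] C) a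
    rw [LinearMap.zero_apply]
    exact (hker (f a)).mpr ⟨a, rfl⟩
  haveI : Mono (ShortComplex.mk f g w).f := (ModuleCat.mono_iff_injective f).mpr hf
  haveI : Epi (ShortComplex.mk f g w).g := (ModuleCat.epi_iff_surjective g).mpr hg
  exact ⟨w, ⟨(ShortComplex.moduleCat_exact_iff (ShortComplex.mk f g w)).mpr
    (fun b hb => (hker b).mp hb)⟩⟩

lemma sesInfo {A B C : ModuleCat.{0} R} {f : A ⟶ B} {g : B ⟶ C} (h : SES f g) :
    Function.Injective f ∧ Function.Surjective g ∧ ∀ b, g b = 0 ↔ ∃ a, f a = b := by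
  obtain ⟨w, hse⟩ := h
  refine ⟨(ModuleCat.mono_iff_injective f).mp hse.mono_f,
    (ModuleCat.epi_iff_surjective g).mp hse.epi_g, fun b => ⟨fun hb =>
      (ShortComplex.moduleCat_exact_iff _).mp hse.exact b hb, ?_⟩⟩
  rintro ⟨a, rfl⟩
  exact (ConcreteCategory.congr_hom w a).trans (LinearMap.zero_apply a)

lemma resdim_iso : ∀ (m : ℕ) {M N : ModuleCat.{0} R} (_ : M ≅ N),
    ResDimLE {F : ModuleCat.{0} R | IsFlatMod F} m M →
    ResDimLE {F : ModuleCat.{0} R | IsFlatMod F} m N := by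
  intro m
  induction m with
  | zero => intro M N e h; exact flat_iso e h
  | succ n _ =>
    intro M N e h
    obtain ⟨K, Cm, f, g, hC, hses, hK⟩ := h
    obtain ⟨hfi, hgs, hk⟩ := sesInfo hses
    refine ⟨K, Cm, f, g ≫ e.hom, hC, ?_, hK⟩
    refine sesOf _ _ hfi (fun c => ?_) (fun b => ?_)
    · obtain ⟨b, hb⟩ := hgs (e.inv c)
      refine ⟨b, ?_⟩
      show e.hom (g b) = c
      rw [hb]
      exact ConcreteCategory.congr_hom e.inv_hom_id c
    · constructor
      · intro hb
        have h2 : e.hom (g b) = 0 := hb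
        have h4 : g b = 0 := by
          calc g b = e.inv (e.hom (g b)) := (ConcreteCategory.congr_hom e.hom_inv_id (g b)).symm
            _ = e.inv 0 := by rw [h2]
            _ = 0 := map_zero _
        exact (hk b).mp h4
      · rintro ⟨a, rfl⟩
        show e.hom (g (f a)) = 0
        rw [show g (f a) = 0 from (hk (f a)).mpr ⟨a, rfl⟩, map_zero]

lemma resdim_prod : ∀ (m : ℕ) {S X : ModuleCat.{0} R},
    ResDimLE {F : ModuleCat.{0} R | IsFlatMod F} m S → IsFlatMod X →
    ResDimLE {F : ModuleCat.{0} R | IsFlatMod F} m (ModuleCat.of R (S × X)) := by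
  intro m
  induction m with
  | zero => intro S X hS hX; exact flat_prod hS hX
  | succ n ih =>
    intro S X hS hX
    obtain ⟨K, Cm, f, g, hC, hses, hK⟩ := hS
    obtain ⟨hfi, hgs, hk⟩ := sesInfo hses
    refine ⟨K, ModuleCat.of R (Cm × X),
      ModuleCat.ofHom (LinearMap.prod f.hom 0 : K →ₗ[R] Cm × X),
      ModuleCat.ofHom (LinearMap.prodMap g.hom LinearMap.id : ↑Cm × ↑X →ₗ[R] ↑S × ↑X),
      flat_prod hC hX, ?_, hK⟩
    refine sesOf _ _ (fun a b hab => hfi (congrArg Prod.fst hab)) (fun p => ?_) (fun p => ?_)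
    · obtain ⟨c, hc⟩ := hgs p.1
      exact ⟨(c, p.2), Prod.ext hc rfl⟩
    · constructor
      · intro hp
        have h1 : g p.1 = 0 := congrArg Prod.fst hp
        have h2 : p.2 = 0 := congrArg Prod.snd hp
        obtain ⟨a, ha⟩ := (hk p.1).mp h1
        refine ⟨a, ?_⟩
        show ((f a, 0) : ↑Cm × ↑X) = p
        refine Prod.ext ?_ ?_
        · exact ha
        · exact h2.symm
      · rintro ⟨a, rfl⟩
        show ((g (f a), 0) : ↑S × ↑X) = 0
        rw [show g (f a) = 0 from (hk (f a)).mpr ⟨a, rfl⟩]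
        rfl

lemma resdim_ker : ∀ (m : ℕ) {B F : ModuleCat.{0} R} (v : B ⟶ F),
    Function.Surjective v → IsFlatMod F →
    ResDimLE {F : ModuleCat.{0} R | IsFlatMod F} m B →
    ResDimLE {F : ModuleCat.{0} R | IsFlatMod F} m (ModuleCat.of R (LinearMap.ker v.hom)) := by
  intro m
  induction m with
  | zero => intro B F v hv hF hB; exact flat_ker v hv hB hF
  | succ n _ =>
    intro B F v hv hF hB
    obtain ⟨B1, Cb, fB, qB, hCb, hses, hB1⟩ := hB
    obtain ⟨hfi, hqs, hk⟩ := sesInfo hses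
    set w : Cb ⟶ F := qB ≫ v with hw
    have hws : Function.Surjective w := by
      intro y
      obtain ⟨b, hb⟩ := hv y
      obtain ⟨c, hc⟩ := hqs b
      exact ⟨c, by show v (qB c) = y; rw [hc, hb]⟩
    have hfmem : ∀ s : B1, fB s ∈ LinearMap.ker w.hom := by
      intro s
      show v (qB (fB s)) = 0
      rw [show qB (fB s) = 0 from (hk (fB s)).mpr ⟨s, rfl⟩, map_zero]
    refine ⟨B1, ModuleCat.of R (LinearMap.ker w.hom),
      ModuleCat.ofHom (LinearMap.codRestrict (LinearMap.ker w.hom) fB.hom hfmem),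
      ModuleCat.ofHom (LinearMap.codRestrict (LinearMap.ker v.hom) (qB.hom.comp (LinearMap.ker w.hom).subtype)
        (fun d => d.2)),
      flat_ker w hws hCb hF, ?_, hB1⟩
    refine sesOf _ _ (fun a b hab => hfi (congrArg Subtype.val hab)) (fun d => ?_) (fun d => ?_)
    · obtain ⟨c, hc⟩ := hqs d.1
      have hcw : c ∈ LinearMap.ker w.hom := by
        show v (qB c) = 0
        rw [hc]
        exact d.2
      exact ⟨⟨c, hcw⟩, Subtype.ext hc⟩
    · constructor
      · intro hd
        have h1 : qB d.1 = 0 := congrArg Subtype.val hd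
        obtain ⟨s, hs⟩ := (hk d.1).mp h1
        exact ⟨s, Subtype.ext hs⟩
      · rintro ⟨s, rfl⟩
        refine Subtype.ext ?_
        show qB (fB s) = 0
        exact (hk (fB s)).mpr ⟨s, rfl⟩

end Aux3

set_option maxHeartbeats 1600000 in
/-- over a ring of finite weak global dimension, Gorenstein (𝓛,𝓐)-projective
modules are exactly the projective modules. -/
theorem stmt9
    (R : Type) [Ring R] (𝓛 : Set (ModuleCat.{0} R)) (𝓐 : Set (ModuleCat.{0} Rᵐᵒᵖ))
    (hdp : CompleteDualityPair 𝓛 𝓐)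
    (hwgl : ∀ N : ModuleCat.{0} R,
      ∃ n : ℕ, ResDimLE {F : ModuleCat.{0} R | IsFlatMod F} n N) :
    ∀ M : ModuleCat.{0} R, IsGProj 𝓛 M ↔ Projective M := by
  intro M
  constructor
  · rintro ⟨C, hTA, n0, ⟨iso⟩⟩
    -- flexible exactness of the complex
    have exact' : ∀ (j i k : ℤ), i = j + 1 → k = j - 1 →
        ∀ x : C.X j, C.d j k x = 0 → ∃ y : C.X i, C.d i j y = x := by
      intro j i k hi hk x hx
      subst hi; subst hk
      have he : C.ExactAt j := hTA.exact j
      rw [C.exactAt_iff' (j + 1) j (j - 1)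
        ((ComplexShape.down ℤ).prev_eq' (by show j + 1 = j + 1; rfl))
        ((ComplexShape.down ℤ).next_eq' (by show (j - 1) + 1 = j; omega))] at he
      exact (ShortComplex.moduleCat_exact_iff _).mp he x hx
    -- flexible hom-exactness
    have homExact' : ∀ T ∈ 𝓛, ∀ (a b : ℤ), b = a - 1 →
        ∀ g : C.X a ⟶ T, C.d (a + 1) a ≫ g = 0 →
        ∃ h : C.X b ⟶ T, C.d a b ≫ h = g := by
      intro T hT a b hb g hg
      subst hb
      exact hTA.homExact T hT a g hg
    -- corestrictions of differentials onto kernels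
    have dmem : ∀ (i j k : ℤ) (x : C.X i), C.d i j x ∈ LinearMap.ker (ModuleCat.Hom.hom <| C.d j k) := by
      intro i j k x
      show C.d j k (C.d i j x) = 0
      exact (ConcreteCategory.congr_hom (C.d_comp_d i j k) x).trans (LinearMap.zero_apply x)
    let gq : ∀ (i j k : ℤ), C.X i ⟶ ModuleCat.of R (LinearMap.ker (ModuleCat.Hom.hom <| C.d j k)) :=
      fun i j k => ModuleCat.ofHom (LinearMap.codRestrict _ (C.d i j).hom (fun x => dmem i j k x))
    let incl : ∀ (j k : ℤ), ModuleCat.of R (LinearMap.ker (ModuleCat.Hom.hom <| C.d j k)) ⟶ C.X j :=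
      fun j k => ModuleCat.ofHom (LinearMap.ker (ModuleCat.Hom.hom <| C.d j k)).subtype
    have gq_surj : ∀ (i j k : ℤ), i = j + 1 → k = j - 1 →
        Function.Surjective (gq i j k) := by
      intro i j k hi hk x
      obtain ⟨y, hy⟩ := exact' j i k hi hk x.1 x.2
      exact ⟨y, Subtype.ext hy⟩
    -- Lemma A1: retraction of the kernel inclusion when the kernel is in 𝓛
    have lemA1 : ∀ (i j : ℤ), i = j + 1 →
        ModuleCat.of R (LinearMap.ker (ModuleCat.Hom.hom <| C.d i j)) ∈ 𝓛 →
        ∃ h : C.X i ⟶ ModuleCat.of R (LinearMap.ker (ModuleCat.Hom.hom <| C.d i j)),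
          incl i j ≫ h = 𝟙 (ModuleCat.of R (LinearMap.ker (ModuleCat.Hom.hom <| C.d i j))) := by
      intro i j hi hmem
      have hcond : C.d (i + 1 + 1) (i + 1) ≫ gq (i + 1) i j = 0 := by
        refine ModuleCat.hom_ext (LinearMap.ext fun x => ?_)
        refine Subtype.ext ?_
        show C.d (i + 1) i (C.d (i + 1 + 1) (i + 1) x) = (0 : C.X i)
        exact (ConcreteCategory.congr_hom (C.d_comp_d (i + 1 + 1) (i + 1) i) x).trans
          (LinearMap.zero_apply x)
      obtain ⟨h, hh⟩ := homExact' _ hmem (i + 1) i (by omega) (gq (i + 1) i j) hcond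
      haveI : Epi (gq (i + 1) i j) := (ModuleCat.epi_iff_surjective _).mpr
        (gq_surj (i + 1) i j rfl (by omega))
      refine ⟨h, ?_⟩
      rw [← cancel_epi (gq (i + 1) i j), ← Category.assoc]
      have hgi : gq (i + 1) i j ≫ incl i j = C.d (i + 1) i :=
        ModuleCat.hom_ext (LinearMap.ext fun _ => rfl)
      rw [hgi, hh, Category.comp_id]
    -- Lemma A: the kernel itself is projective
    have lemA_proj : ∀ (i j : ℤ), i = j + 1 →
        ModuleCat.of R (LinearMap.ker (ModuleCat.Hom.hom <| C.d i j)) ∈ 𝓛 →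
        Projective (ModuleCat.of R (LinearMap.ker (ModuleCat.Hom.hom <| C.d i j))) := by
      intro i j hi hmem
      obtain ⟨h, hh⟩ := lemA1 i j hi hmem
      haveI := hTA.projective i
      exact projective_of_retract (incl i j) h hh
    -- Lemma A2: the next kernel is projective
    have lemA2 : ∀ (i j k : ℤ), i = j + 1 → k = j - 1 →
        ModuleCat.of R (LinearMap.ker (ModuleCat.Hom.hom <| C.d i j)) ∈ 𝓛 →
        Projective (ModuleCat.of R (LinearMap.ker (ModuleCat.Hom.hom <| C.d j k))) := by
      intro i j k hi hk hmem
      obtain ⟨h, hh⟩ := lemA1 i j hi hmem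
      haveI := hTA.projective i
      haveI : Epi (gq i j k) := (ModuleCat.epi_iff_surjective _).mpr (gq_surj i j k hi hk)
      set π : C.X i ⟶ C.X i := 𝟙 (C.X i) - (h ≫ incl i j) with hπ
      have hker : kernel.ι (gq i j k) ≫ π = 0 := by
        refine ModuleCat.hom_ext (LinearMap.ext fun κ => ?_)
        set x := kernel.ι (gq i j k) κ with hx
        have hx0 : gq i j k x = 0 := by
          have h0 := ConcreteCategory.congr_hom (kernel.condition (gq i j k)) κ
          rw [hx]
          exact h0.trans (LinearMap.zero_apply κ)
        have hxmem : x ∈ LinearMap.ker (ModuleCat.Hom.hom <| C.d i j) := congrArg Subtype.val hx0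
        have hrx : h x = (⟨x, hxmem⟩ : LinearMap.ker (ModuleCat.Hom.hom <| C.d i j)) :=
          ConcreteCategory.congr_hom hh (⟨x, hxmem⟩ : LinearMap.ker (ModuleCat.Hom.hom <| C.d i j))
        show x - incl i j (h x) = (0 : (kernel (gq i j k) : ModuleCat.{0} R) →ₗ[R] C.X i) κ
        rw [LinearMap.zero_apply, hrx]
        show x - x = 0
        rw [sub_self]
      set σ := Abelian.epiDesc (gq i j k) π hker with hσ
      have hcomp : gq i j k ≫ σ = π := Abelian.comp_epiDesc _ _ _
      have hret : σ ≫ gq i j k = 𝟙 _ := by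
        rw [← cancel_epi (gq i j k), ← Category.assoc, hcomp, Category.comp_id, hπ,
          Preadditive.sub_comp, Category.id_comp]
        have hz : incl i j ≫ gq i j k = 0 := by
          refine ModuleCat.hom_ext (LinearMap.ext fun t => ?_)
          refine Subtype.ext ?_
          show C.d i j t.1 = (0 : C.X j)
          exact t.2
        rw [Category.assoc, hz, Limits.comp_zero, sub_zero]
      exact projective_of_retract σ (gq i j k) hret
    -- Main induction on the flat resolution dimension
    have ind : ∀ (m : ℕ) (j : ℤ),
        ResDimLE {F : ModuleCat.{0} R | IsFlatMod F} m
          (ModuleCat.of R (LinearMap.ker (ModuleCat.Hom.hom <| C.d j (j - 1)))) →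
        Projective (ModuleCat.of R (LinearMap.ker (ModuleCat.Hom.hom <| C.d j (j - 1)))) := by
      intro m
      induction m with
      | zero =>
        intro j hflat
        exact lemA_proj j (j - 1) (by omega) (flat_mem hdp hflat)
      | succ n ih =>
        intro j hres
        obtain ⟨S, F, fS, pF, hF, hses, hS⟩ := hres
        obtain ⟨hfSi, hpFs, hkS⟩ := sesInfo hses
        set q : C.X (j + 1) ⟶ ModuleCat.of R (LinearMap.ker (ModuleCat.Hom.hom <| C.d j (j - 1))) :=
          gq (j + 1) j (j - 1) with hqdef
        have hqs : Function.Surjective q := gq_surj (j + 1) j (j - 1) rfl rfl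
        set w : ModuleCat.of R (C.X (j + 1) × F) ⟶
            ModuleCat.of R (LinearMap.ker (ModuleCat.Hom.hom <| C.d j (j - 1))) :=
          ModuleCat.ofHom ((q.hom.comp (LinearMap.fst R (C.X (j + 1)) F)) -
            (pF.hom.comp (LinearMap.snd R (C.X (j + 1)) F))) with hw
        set B := ModuleCat.of R (LinearMap.ker w.hom) with hB
        set v : B ⟶ F := ModuleCat.ofHom ((LinearMap.snd R (C.X (j + 1)) F).comp (LinearMap.ker w.hom).subtype)
          with hv
        set u : B ⟶ C.X (j + 1) :=
          ModuleCat.ofHom ((LinearMap.fst R (C.X (j + 1)) F).comp (LinearMap.ker w.hom).subtype) with hu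
        have hvs : Function.Surjective v := by
          intro y
          obtain ⟨x, hx⟩ := hqs (pF y)
          refine ⟨⟨(x, y), ?_⟩, rfl⟩
          show q x - pF y = 0
          rw [hx, sub_self]
        have hus : Function.Surjective u := by
          intro x
          obtain ⟨f, hf⟩ := hpFs (q x)
          refine ⟨⟨(x, f), ?_⟩, rfl⟩
          show q x - pF f = 0
          rw [hf, sub_self]
        haveI : Epi u := (ModuleCat.epi_iff_surjective u).mpr hus
        haveI := hTA.projective (j + 1)
        set σ : C.X (j + 1) ⟶ B := Projective.factorThru (𝟙 (C.X (j + 1))) u with hσdef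
        have hσu : σ ≫ u = 𝟙 (C.X (j + 1)) := Projective.factorThru_comp _ _
        have hσu' : ∀ x, u (σ x) = x := fun x => ConcreteCategory.congr_hom hσu x
        set uS : S ⟶ B := ModuleCat.ofHom <| LinearMap.codRestrict (LinearMap.ker w.hom)
          ((LinearMap.inr R (C.X (j + 1)) F).comp fS.hom) (fun s => by
            show q 0 - pF (fS s) = 0
            rw [map_zero, show pF (fS s) = 0 from (hkS (fS s)).mpr ⟨s, rfl⟩, sub_zero]) with huS
        have huuS : ∀ s, u (uS s) = 0 := fun s => rfl
        have hvuS : ∀ s, v (uS s) = fS s := fun s => rfl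
        set e : ↑S × ↑(C.X (j + 1)) →ₗ[R] B := LinearMap.coprod uS.hom σ.hom with he
        have hinj0 : ∀ p : ↑S × ↑(C.X (j + 1)), e p = 0 → p = 0 := by
          intro p hp
          have h0 : u (uS p.1 + σ p.2) = 0 := by
            rw [show (uS p.1 + σ p.2 : B) = e p from rfl, hp, map_zero]
          rw [map_add, huuS, hσu', zero_add] at h0
          have h1 : uS p.1 + σ p.2 = 0 := by
            rw [show (uS p.1 + σ p.2 : B) = e p from rfl, hp]
          rw [h0, map_zero, add_zero] at h1
          have h2 : fS p.1 = 0 := by rw [← hvuS p.1, h1, map_zero]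
          have h3 : p.1 = 0 := hfSi (by rw [h2, map_zero])
          exact Prod.ext h3 h0
        have hinj : Function.Injective e := by
          intro p p' hpp
          have := hinj0 (p - p') (by rw [map_sub, hpp, sub_self])
          exact sub_eq_zero.mp this
        have hsurj : Function.Surjective e := by
          intro b
          set x := u b with hxdef
          set b' : (B : Type) := b - σ x with hb'def
          have hub' : u b' = 0 := by
            rw [hb'def, map_sub, hσu', sub_self]
          have hfst : (b'.1 : ↑(C.X (j + 1)) × ↑F).1 = 0 := hub'
          have hmem : q (b'.1 : ↑(C.X (j + 1)) × ↑F).1 -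
              pF (b'.1 : ↑(C.X (j + 1)) × ↑F).2 = 0 := b'.2
          have hpF0 : pF (b'.1 : ↑(C.X (j + 1)) × ↑F).2 = 0 := by
            rw [hfst, map_zero, zero_sub, neg_eq_zero] at hmem
            exact hmem
          obtain ⟨s, hs⟩ := (hkS _).mp hpF0
          refine ⟨(s, x), ?_⟩
          show uS s + σ x = b
          have : uS s = b' := by
            refine Subtype.ext ?_
            refine Prod.ext ?_ ?_
            · exact hfst.symm
            · exact hs
          rw [this, hb'def, sub_add_cancel]
        have hBres : ResDimLE {F : ModuleCat.{0} R | IsFlatMod F} n B :=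
          resdim_iso n (LinearEquiv.toModuleIso (LinearEquiv.ofBijective e ⟨hinj, hsurj⟩))
            (resdim_prod n hS (proj_flat (hTA.projective (j + 1))))
        have hKres : ResDimLE {F : ModuleCat.{0} R | IsFlatMod F} n
            (ModuleCat.of R (LinearMap.ker v.hom)) := resdim_ker n v hvs hF hBres
        -- identify ker v with ker (C.d (j+1) j)
        have memto : ∀ κ : LinearMap.ker v.hom, u κ.1 ∈ LinearMap.ker (ModuleCat.Hom.hom <| C.d (j + 1) j) := by
          intro κ
          have h2 : (κ.1.1 : ↑(C.X (j + 1)) × ↑F).2 = 0 := κ.2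
          have h3 : q (κ.1.1 : ↑(C.X (j + 1)) × ↑F).1 -
              pF (κ.1.1 : ↑(C.X (j + 1)) × ↑F).2 = 0 := κ.1.2
          rw [h2, map_zero, sub_zero] at h3
          exact congrArg Subtype.val h3
        set toK : (ModuleCat.of R (LinearMap.ker v.hom) : Type) →ₗ[R]
            LinearMap.ker (ModuleCat.Hom.hom <| C.d (j + 1) j) :=
          LinearMap.codRestrict _ (u.hom.comp (LinearMap.ker v.hom).subtype) memto with htoK
        have memfrom1 : ∀ x : LinearMap.ker (ModuleCat.Hom.hom <| C.d (j + 1) j),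
            ((x.1, 0) : ↑(C.X (j + 1)) × ↑F) ∈ LinearMap.ker w.hom := by
          intro x
          show q x.1 - pF 0 = 0
          rw [map_zero, sub_zero]
          exact Subtype.ext x.2
        set fromK0 : (LinearMap.ker (ModuleCat.Hom.hom <| C.d (j + 1) j) : Type) →ₗ[R] (B : Type) :=
          LinearMap.codRestrict (LinearMap.ker w.hom)
            ((LinearMap.inl R (C.X (j + 1)) F).comp (LinearMap.ker (ModuleCat.Hom.hom <| C.d (j + 1) j)).subtype)
            memfrom1 with hfromK0
        set fromK : (LinearMap.ker (ModuleCat.Hom.hom <| C.d (j + 1) j) : Type) →ₗ[R] LinearMap.ker v.hom :=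
          LinearMap.codRestrict (LinearMap.ker v.hom) fromK0 (fun x => rfl) with hfromK
        have e2 : (ModuleCat.of R (LinearMap.ker v.hom) : Type) ≃ₗ[R]
            LinearMap.ker (ModuleCat.Hom.hom <| C.d (j + 1) j) := by
          refine LinearEquiv.ofLinear toK fromK ?_ ?_
          · refine LinearMap.ext fun x => ?_
            exact Subtype.ext rfl
          · refine LinearMap.ext fun κ => ?_
            refine Subtype.ext (Subtype.ext (Prod.ext rfl ?_))
            show (0 : (F : Type)) = (κ.1.1 : ↑(C.X (j + 1)) × ↑F).2
            exact (κ.2 : _).symm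
        have hNres : ResDimLE {F : ModuleCat.{0} R | IsFlatMod F} n
            (ModuleCat.of R (LinearMap.ker (ModuleCat.Hom.hom <| C.d (j + 1) j))) :=
          resdim_iso n (LinearEquiv.toModuleIso e2) hKres
        have h5 := ih (j + 1) (by
          rw [show (j : ℤ) + 1 - 1 = j from by omega]
          exact hNres)
        have h6 : ModuleCat.of R (LinearMap.ker (ModuleCat.Hom.hom <| C.d (j + 1) (j + 1 - 1))) =
            ModuleCat.of R (LinearMap.ker (ModuleCat.Hom.hom <| C.d (j + 1) j)) := by
          rw [show (j : ℤ) + 1 - 1 = j from by omega]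
        rw [h6] at h5
        exact lemA2 (j + 1) j (j - 1) rfl rfl (proj_mem hdp h5)
    obtain ⟨m, hm⟩ := hwgl (ModuleCat.of R (LinearMap.ker (ModuleCat.Hom.hom <| C.d n0 (n0 - 1))))
    exact Projective.of_iso (iso ≪≫ ModuleCat.kernelIsoKer (C.d n0 (n0 - 1))).symm
      (ind m n0 hm)
  · -- easy direction: projective modules are Gorenstein projective
    intro hM
    haveI := hM
    set P2 : ModuleCat.{0} R := ModuleCat.of R (↑M × ↑M) with hP2
    set e : P2 ⟶ P2 := ModuleCat.ofHom ((LinearMap.snd R M M).prod 0) with he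
    have hP2proj : Projective P2 := by
      constructor
      intro E X' f' e' he'
      have hg1 := Projective.factorThru_comp ((ModuleCat.ofHom (LinearMap.inl R M M) : M ⟶ P2) ≫ f') e'
      have hg2 := Projective.factorThru_comp ((ModuleCat.ofHom (LinearMap.inr R M M) : M ⟶ P2) ≫ f') e'
      refine ⟨ModuleCat.ofHom (LinearMap.coprod (Projective.factorThru ((ModuleCat.ofHom (LinearMap.inl R M M) : M ⟶ P2) ≫ f') e').hom
        (Projective.factorThru ((ModuleCat.ofHom (LinearMap.inr R M M) : M ⟶ P2) ≫ f') e').hom), ?_⟩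
      refine ModuleCat.hom_ext (LinearMap.ext fun p => ?_)
      show e' (Projective.factorThru ((ModuleCat.ofHom (LinearMap.inl R M M) : M ⟶ P2) ≫ f') e' p.1 +
        Projective.factorThru ((ModuleCat.ofHom (LinearMap.inr R M M) : M ⟶ P2) ≫ f') e' p.2) = f' p
      rw [map_add]
      have c1 : e' (Projective.factorThru ((ModuleCat.ofHom (LinearMap.inl R M M) : M ⟶ P2) ≫ f') e' p.1) =
          f' ((p.1, 0) : ↑M × ↑M) := ConcreteCategory.congr_hom hg1 p.1
      have c2 : e' (Projective.factorThru ((ModuleCat.ofHom (LinearMap.inr R M M) : M ⟶ P2) ≫ f') e' p.2) =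
          f' ((0, p.2) : ↑M × ↑M) := ConcreteCategory.congr_hom hg2 p.2
      rw [c1, c2, ← map_add]
      congr 1
      refine Prod.ext ?_ ?_
      · show p.1 + 0 = p.1
        rw [add_zero]
      · show 0 + p.2 = p.2
        rw [zero_add]
    have hee : e ≫ e = 0 := by
      refine ModuleCat.hom_ext (LinearMap.ext fun p => ?_)
      show (((0 : (M : Type)), (0 : (M : Type))) : ↑M × ↑M) =
        (0 : P2 →ₗ[R] P2) p
      rw [LinearMap.zero_apply]
      rfl
    set Cx : ChainComplex (ModuleCat.{0} R) ℤ :=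
      { X := fun _ => P2
        d := fun i j => if i = j + 1 then e else 0
        shape := fun i j hij => by
          show (if i = j + 1 then e else 0) = 0
          exact if_neg (fun h => hij h.symm)
        d_comp_d' := fun i j k hij hjk => by
          show (if i = j + 1 then e else 0) ≫ (if j = k + 1 then e else 0) = 0
          rw [if_pos hij.symm, if_pos hjk.symm]
          exact hee } with hCx
    have hd : ∀ i j : ℤ, i = j + 1 → Cx.d i j = e := fun i j h => if_pos h
    refine ⟨Cx, ⟨fun _ => hP2proj, ?_, ?_⟩, 0, ⟨?_⟩⟩
    · -- exactness
      intro n1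
      show Cx.ExactAt n1
      rw [Cx.exactAt_iff' (n1 + 1) n1 (n1 - 1)
        ((ComplexShape.down ℤ).prev_eq' (by show n1 + 1 = n1 + 1; rfl))
        ((ComplexShape.down ℤ).next_eq' (by show (n1 - 1) + 1 = n1; omega))]
      refine (ShortComplex.moduleCat_exact_iff _).mpr ?_
      intro p hp
      have hp' : Cx.d n1 (n1 - 1) p = 0 := hp
      rw [hd n1 (n1 - 1) (by omega)] at hp'
      have hp2 : (p : ↑M × ↑M).2 = 0 := congrArg Prod.fst hp'
      refine ⟨((0 : (M : Type)), (p : ↑M × ↑M).1), ?_⟩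
      show Cx.d (n1 + 1) n1 ((0 : (M : Type)), (p : ↑M × ↑M).1) = p
      rw [hd (n1 + 1) n1 rfl]
      show (((p : ↑M × ↑M).1, (0 : (M : Type))) :
        ↑M × ↑M) = p
      exact Prod.ext rfl hp2.symm
    · -- hom-exactness
      intro T _ n1 g hg
      rw [hd (n1 + 1) n1 rfl] at hg
      refine ⟨ModuleCat.ofHom (g.hom.comp ((LinearMap.inr R M M).comp (LinearMap.fst R M M))), ?_⟩
      rw [hd n1 (n1 - 1) (by omega)]
      refine ModuleCat.hom_ext (LinearMap.ext fun p => ?_)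
      show g ((0 : (M : Type)), (p : ↑M × ↑M).2) = g p
      have hz : g (((p : ↑M × ↑M).1, (0 : (M : Type))) :
          ↑M × ↑M) = 0 := by
        have := ConcreteCategory.congr_hom hg ((0 : (M : Type)), (p : ↑M × ↑M).1)
        exact this.trans (LinearMap.zero_apply _)
      calc g ((0 : (M : Type)), (p : ↑M × ↑M).2)
          = 0 + g ((0 : (M : Type)), (p : ↑M × ↑M).2) := by rw [zero_add]
        _ = g (((p : ↑M × ↑M).1, (0 : (M : Type))) :
              ↑M × ↑M) +
            g ((0 : (M : Type)), (p : ↑M × ↑M).2) := by rw [hz]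
        _ = g p := by
            rw [← map_add]
            congr 1
            refine Prod.ext ?_ ?_
            · show (p : ↑M × ↑M).1 + 0 = (p : ↑M × ↑M).1
              rw [add_zero]
            · show 0 + (p : ↑M × ↑M).2 = (p : ↑M × ↑M).2
              rw [zero_add]
    · -- the kernel of d 0 (0-1) is M
      have hd0 : Cx.d 0 (0 - 1) = e := hd 0 (0 - 1) (by omega)
      refine ?_ ≪≫ (kernelIsoOfEq hd0).symm
      have hcond : (ModuleCat.ofHom (LinearMap.inl R M M) : M ⟶ P2) ≫ e = 0 := by
        refine ModuleCat.hom_ext (LinearMap.ext fun x => ?_)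
        show (((0 : (M : Type)), (0 : (M : Type))) : ↑M × ↑M) =
          (0 : M →ₗ[R] P2) x
        rw [LinearMap.zero_apply]
        rfl
      refine ⟨kernel.lift e (ModuleCat.ofHom (LinearMap.inl R M M) : M ⟶ P2) hcond,
        kernel.ι e ≫ (ModuleCat.ofHom (LinearMap.fst R M M) : P2 ⟶ M), ?_, ?_⟩
      · rw [← Category.assoc, kernel.lift_ι]
        refine ModuleCat.hom_ext (LinearMap.ext fun x => ?_)
        rfl
      · rw [← cancel_mono (kernel.ι e), Category.assoc, Category.assoc, kernel.lift_ι,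
          Category.id_comp]
        refine ModuleCat.hom_ext (LinearMap.ext fun z => ?_)
        have hz := (ConcreteCategory.congr_hom (kernel.condition e) z).trans
          (LinearMap.zero_apply z)
        have hz2 : ((kernel.ι e z : (P2 : Type)) :
            ↑M × ↑M).2 = 0 := congrArg Prod.fst hz
        show ((((kernel.ι e z : (P2 : Type)) : ↑M × ↑M).1,
          (0 : (M : Type))) : ↑M × ↑M) = kernel.ι e z
        exact Prod.ext rfl hz2.symm

end DualityPaper
end
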